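/- arXiv:cs/0608007 — 5 statements merged into one kernel-verified Lean document; each statement's English description precedes it below -/
import Mathlib

section
/- Let n ≥ 1 and, for each i = 1,…,n, let P_{X_i Y_i} be a probability distribution on 𝒳 × 𝒴 (𝒳, 𝒴 finite), and let P_{X^n Y^n} := P_{X_1 Y_1} × ⋯ × P_{X_n Y_n}. Then for any δ ∈ [0, log |𝒳|], when (𝐱, 𝐲) is chosen according to P_{X^n Y^n}, the probability that −log(P_{X^n|Y^n}(𝐱,𝐲)) ≤ H(X^n|Y^n) − nδ is at most 2^{-nδ²/(2 log²(|𝒳|+3))}. -/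
open Finset Real

/-- The conditional Shannon entropy `H(X|Y)` of a joint distribution `P` on `X × Y`,
with binary logarithm. -/
noncomputable def condEntropy' {X Y : Type*} [Fintype X] [Fintype Y]
    (P : X × Y → ℝ) : ℝ :=
  -∑ z : X × Y, P z * Real.logb 2 (P z / (∑ x : X, P (x, z.2)))

lemma mul_log_sq_le {w : ℝ} (h0 : 0 ≤ w) (h1 : w ≤ 1) :
    w * (Real.log w) ^ 2 ≤ 4 / Real.exp 2 := by
  rcases eq_or_lt_of_le h0 with h | h
  · rw [← h]; rw [zero_mul]; positivity
  · set t : ℝ := -Real.log w with htdef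
    have htn : 0 ≤ t := by
      have := Real.log_nonpos h0 h1; simp [htdef]; linarith
    have hw : w = Real.exp (-t) := by
      rw [htdef, neg_neg, Real.exp_log h]
    have key : t / 2 ≤ Real.exp (t / 2 - 1) := by
      have := Real.add_one_le_exp (t / 2 - 1); linarith
    have h2 : (t / 2) ^ 2 ≤ (Real.exp (t / 2 - 1)) ^ 2 :=
      pow_le_pow_left₀ (by positivity) key 2
    have h3 : (Real.exp (t / 2 - 1)) ^ 2 = Real.exp t / Real.exp 2 := by
      rw [← Real.exp_nat_mul]; push_cast
      rw [← Real.exp_sub]; ring_nf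
    have h2' : (t / 2) ^ 2 * Real.exp 2 ≤ Real.exp t := by
      rw [h3] at h2; exact (le_div_iff₀ (Real.exp_pos 2)).1 h2
    have hlw : (Real.log w) ^ 2 = t ^ 2 := by rw [htdef]; ring
    rw [hlw, hw, Real.exp_neg]
    rw [inv_mul_eq_div, div_le_div_iff₀ (Real.exp_pos t) (Real.exp_pos 2)]
    nlinarith [h2', Real.exp_pos t, Real.exp_pos 2, sq_nonneg t]

lemma mul_neg_log_le {w : ℝ} (h0 : 0 ≤ w) (h1 : w ≤ 1) :
    w * (-Real.log w) ≤ 1 / Real.exp 1 := by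
  rcases eq_or_lt_of_le h0 with h | h
  · rw [← h]; rw [zero_mul]; positivity
  · set t : ℝ := -Real.log w with htdef
    have htn : 0 ≤ t := by
      have := Real.log_nonpos h0 h1; simp [htdef]; linarith
    have hw : w = Real.exp (-t) := by rw [htdef, neg_neg, Real.exp_log h]
    have key : t ≤ Real.exp (t - 1) := by
      have := Real.add_one_le_exp (t - 1); linarith
    have h3 : Real.exp (t - 1) = Real.exp t / Real.exp 1 := Real.exp_sub t 1
    have key' : t * Real.exp 1 ≤ Real.exp t := by
      rw [h3] at key
      exact (le_div_iff₀ (Real.exp_pos 1)).1 key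
    have hlogw : Real.log w = -t := by rw [htdef]; ring
    have : w * (-Real.log w) = Real.exp (-t) * t := by rw [hlogw, hw]; ring
    rw [this, Real.exp_neg, inv_mul_eq_div,
      div_le_div_iff₀ (Real.exp_pos t) (Real.exp_pos 1)]
    linarith [key']

set_option maxHeartbeats 2000000 in
lemma varBound {X : Type*} [Fintype X] [Nonempty X] (q : X → ℝ)
    (h0 : ∀ x, 0 ≤ q x) (h1 : ∑ x, q x = 1) :
    ∑ x, q x * (Real.log (q x)) ^ 2
      ≤ (Real.log ((Fintype.card X : ℝ) + 3)) ^ 2 / Real.log 2 := by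
  classical
  set M := Fintype.card X with hMdef
  have hM1 : 1 ≤ M := Fintype.card_pos
  set c : ℝ := (M : ℝ) + 3 with hcdef
  have hc4 : (4 : ℝ) ≤ c := by
    have : (1 : ℝ) ≤ (M : ℝ) := by exact_mod_cast hM1
    simp [hcdef]; linarith
  have hcpos : (0 : ℝ) < c := by linarith
  set L : ℝ := Real.log c with hLdef
  have hln2pos : 0 < Real.log 2 := Real.log_pos one_lt_two
  have hln2lt : Real.log 2 < 0.6931471808 := Real.log_two_lt_d9
  have hln2gt : (0.6931471803 : ℝ) < Real.log 2 := Real.log_two_gt_d9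
  have hE : (2.7182818283 : ℝ) < Real.exp 1 := Real.exp_one_gt_d9
  have hEpos : (0 : ℝ) < Real.exp 1 := Real.exp_pos 1
  have hE2 : Real.exp 2 = Real.exp 1 * Real.exp 1 := by
    rw [← Real.exp_add]; norm_num
  have hE2pos : (0 : ℝ) < Real.exp 2 := Real.exp_pos 2
  have hL4 : 2 * Real.log 2 ≤ L := by
    have h4 : Real.log 4 = 2 * Real.log 2 := by
      rw [show (4 : ℝ) = 2 ^ 2 by norm_num, Real.log_pow]; push_cast; ring
    rw [hLdef, ← h4]
    exact Real.log_le_log (by norm_num) hc4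
  have hLpos : 0 < L := lt_of_lt_of_le (by linarith) hL4
  have hq1 : ∀ x, q x ≤ 1 := by
    intro x
    rw [← h1]
    exact Finset.single_le_sum (fun i _ => h0 i) (mem_univ x)
  by_cases hM6 : M ≤ 6
  · -- small cardinality case
    have hsum : ∑ x, q x * (Real.log (q x)) ^ 2 ≤ (M : ℝ) * (4 / Real.exp 2) := by
      have := Finset.sum_le_card_nsmul (Finset.univ : Finset X)
        (fun x => q x * (Real.log (q x)) ^ 2) (4 / Real.exp 2)
        (fun x _ => mul_log_sq_le (h0 x) (hq1 x))
      simpa [nsmul_eq_mul, hMdef] using this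
    by_cases hM4 : M ≤ 4
    · have hsum' : ∑ x, q x * (Real.log (q x)) ^ 2 ≤ 16 / Real.exp 2 := by
        have hMr : (M : ℝ) ≤ 4 := by exact_mod_cast hM4
        have : (M : ℝ) * (4 / Real.exp 2) ≤ 4 * (4 / Real.exp 2) := by
          apply mul_le_mul_of_nonneg_right hMr (by positivity)
        calc ∑ x, q x * (Real.log (q x)) ^ 2 ≤ (M : ℝ) * (4 / Real.exp 2) := hsum
          _ ≤ 4 * (4 / Real.exp 2) := this
          _ = 16 / Real.exp 2 := by ring
      have hrhs : 4 * Real.log 2 ≤ L ^ 2 / Real.log 2 := by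
        rw [le_div_iff₀ hln2pos]
        nlinarith [hL4, hln2pos, hLpos]
      have h16 : 16 / Real.exp 2 ≤ 4 * Real.log 2 := by
        rw [div_le_iff₀ hE2pos, hE2]
        nlinarith [hE, hln2gt]
      linarith
    · push_neg at hM4
      have hc8 : (8 : ℝ) ≤ c := by
        have : (5 : ℝ) ≤ (M : ℝ) := by exact_mod_cast hM4
        simp [hcdef]; linarith
      have hL8 : 3 * Real.log 2 ≤ L := by
        have h8 : Real.log 8 = 3 * Real.log 2 := by
          rw [show (8 : ℝ) = 2 ^ 3 by norm_num, Real.log_pow]; push_cast; ring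
        rw [hLdef, ← h8]
        exact Real.log_le_log (by norm_num) hc8
      have hsum' : ∑ x, q x * (Real.log (q x)) ^ 2 ≤ 24 / Real.exp 2 := by
        have hMr : (M : ℝ) ≤ 6 := by exact_mod_cast hM6
        have : (M : ℝ) * (4 / Real.exp 2) ≤ 6 * (4 / Real.exp 2) := by
          apply mul_le_mul_of_nonneg_right hMr (by positivity)
        calc ∑ x, q x * (Real.log (q x)) ^ 2 ≤ (M : ℝ) * (4 / Real.exp 2) := hsum
          _ ≤ 6 * (4 / Real.exp 2) := this
          _ = 24 / Real.exp 2 := by ring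
      have hrhs : 9 * Real.log 2 ≤ L ^ 2 / Real.log 2 := by
        rw [le_div_iff₀ hln2pos]
        nlinarith [hL8, hln2pos, hLpos]
      have h24 : 24 / Real.exp 2 ≤ 9 * Real.log 2 := by
        rw [div_le_iff₀ hE2pos, hE2]
        nlinarith [hE, hln2gt]
      linarith
  · -- large cardinality case
    push_neg at hM6
    have hc10 : (10 : ℝ) ≤ c := by
      have : (7 : ℝ) ≤ (M : ℝ) := by exact_mod_cast hM6
      simp [hcdef]; linarith
    have hL23 : (2.3 : ℝ) ≤ L := by
      rw [hLdef, Real.le_log_iff_exp_le (by linarith)]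
      have h10 : Real.exp (2.3 : ℝ) ^ (10 : ℕ) = Real.exp 23 := by
        rw [← Real.exp_nat_mul]; norm_num
      have h23 : Real.exp 23 ≤ 10 ^ (10 : ℕ) := by
        have : Real.exp 23 = Real.exp 1 ^ (23 : ℕ) := by
          rw [← Real.exp_nat_mul]; norm_num
        rw [this]
        have hE' : Real.exp 1 ≤ 2.7182818286 := le_of_lt Real.exp_one_lt_d9
        calc Real.exp 1 ^ (23 : ℕ) ≤ (2.7182818286 : ℝ) ^ (23 : ℕ) :=
              pow_le_pow_left₀ (le_of_lt hEpos) hE' 23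
          _ ≤ 10 ^ (10 : ℕ) := by norm_num
      have : Real.exp (2.3 : ℝ) ^ (10 : ℕ) ≤ 10 ^ (10 : ℕ) := by rw [h10]; exact h23
      calc Real.exp (2.3 : ℝ) ≤ 10 := by
            apply le_of_pow_le_pow_left₀ (by norm_num) (by norm_num) this
        _ ≤ c := hc10
    -- per-term bound
    have hterm : ∀ x, q x * (Real.log (q x)) ^ 2
        ≤ q x * L ^ 2 + (4 / Real.exp 2 + 2 * L / Real.exp 1) / c := by
      intro x
      have hslack : 0 ≤ (4 / Real.exp 2 + 2 * L / Real.exp 1) / c := by positivity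
      by_cases hx : 1 / c ≤ q x
      · -- big entries
        have hlogle : Real.log (q x) ≤ 0 := Real.log_nonpos (h0 x) (hq1 x)
        have hlogge : -L ≤ Real.log (q x) := by
          have h1c : Real.log (1 / c) ≤ Real.log (q x) :=
            Real.log_le_log (by positivity) hx
          rw [Real.log_div one_ne_zero (ne_of_gt hcpos), Real.log_one] at h1c
          simpa [hLdef] using h1c
        have hsq : (Real.log (q x)) ^ 2 ≤ L ^ 2 := sq_le_sq' hlogge (by linarith)
        have : q x * (Real.log (q x)) ^ 2 ≤ q x * L ^ 2 :=
          mul_le_mul_of_nonneg_left hsq (h0 x)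
        linarith
      · -- small entries
        push_neg at hx
        rcases eq_or_lt_of_le (h0 x) with h | h
        · rw [← h]; simpa using hslack
        · set w : ℝ := q x * c with hwdef
          have hw0 : 0 < w := by positivity
          have hw1 : w ≤ 1 := by
            rw [hwdef]
            calc q x * c ≤ (1 / c) * c := by
                  apply mul_le_mul_of_nonneg_right (le_of_lt hx) (le_of_lt hcpos)
              _ = 1 := by field_simp
          have hqw : q x = w / c := by rw [hwdef]; field_simp
          have hlogq : Real.log (q x) = Real.log w - L := by
            rw [hqw, Real.log_div (ne_of_gt hw0) (ne_of_gt hcpos), hLdef]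
          have hkey : q x * (Real.log (q x)) ^ 2 - q x * L ^ 2
              = (w * (Real.log w) ^ 2 + 2 * L * (w * (-Real.log w))) / c := by
            rw [hlogq, hqw]; field_simp; ring
          have hb1 : w * (Real.log w) ^ 2 ≤ 4 / Real.exp 2 :=
            mul_log_sq_le (le_of_lt hw0) hw1
          have hb2 : 2 * L * (w * (-Real.log w)) ≤ 2 * L * (1 / Real.exp 1) := by
            apply mul_le_mul_of_nonneg_left (mul_neg_log_le (le_of_lt hw0) hw1)
            linarith
          have : q x * (Real.log (q x)) ^ 2 - q x * L ^ 2
              ≤ (4 / Real.exp 2 + 2 * L / Real.exp 1) / c := by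
            rw [hkey]
            gcongr
            calc 2 * L * (w * (-Real.log w)) ≤ 2 * L * (1 / Real.exp 1) := hb2
              _ = 2 * L / Real.exp 1 := by ring
          linarith
    -- sum up
    have hsum : ∑ x, q x * (Real.log (q x)) ^ 2
        ≤ L ^ 2 + (M : ℝ) * ((4 / Real.exp 2 + 2 * L / Real.exp 1) / c) := by
      calc ∑ x, q x * (Real.log (q x)) ^ 2
          ≤ ∑ x, (q x * L ^ 2 + (4 / Real.exp 2 + 2 * L / Real.exp 1) / c) :=
            Finset.sum_le_sum (fun x _ => hterm x)
        _ = (∑ x, q x) * L ^ 2 + (M : ℝ) * ((4 / Real.exp 2 + 2 * L / Real.exp 1) / c) := by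
            rw [Finset.sum_add_distrib, ← Finset.sum_mul, Finset.sum_const]
            simp [nsmul_eq_mul, hMdef]
        _ = L ^ 2 + (M : ℝ) * ((4 / Real.exp 2 + 2 * L / Real.exp 1) / c) := by
            rw [h1, one_mul]
    have hMc : (M : ℝ) / c ≤ 1 := by
      rw [div_le_one hcpos, hcdef]; linarith
    have hsum2 : ∑ x, q x * (Real.log (q x)) ^ 2
        ≤ L ^ 2 + (4 / Real.exp 2 + 2 * L / Real.exp 1) := by
      have hnn : 0 ≤ 4 / Real.exp 2 + 2 * L / Real.exp 1 := by positivity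
      have heq : (M : ℝ) * ((4 / Real.exp 2 + 2 * L / Real.exp 1) / c)
          = ((M : ℝ) / c) * (4 / Real.exp 2 + 2 * L / Real.exp 1) := by ring
      have hstep := mul_le_mul_of_nonneg_right hMc hnn
      rw [one_mul] at hstep
      rw [heq] at hsum
      linarith [hsum, hstep]
    -- final numeric inequality
    have hEi : 1 / Real.exp 1 ≤ 0.368 := by
      rw [div_le_iff₀ hEpos]; linarith [hE]
    have hEE : (7.389 : ℝ) ≤ Real.exp 1 * Real.exp 1 := by
      have h := mul_le_mul hE.le hE.le (by norm_num) hEpos.le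
      nlinarith [h]
    have hE2i : 1 / Real.exp 2 ≤ 0.1355 := by
      rw [div_le_iff₀ hE2pos, hE2]; linarith [hEE]
    have hfinal : L ^ 2 + (4 / Real.exp 2 + 2 * L / Real.exp 1) ≤ L ^ 2 / Real.log 2 := by
      rw [le_div_iff₀ hln2pos]
      have h4e : 4 / Real.exp 2 ≤ 4 * 0.1355 := by
        have : 4 / Real.exp 2 = 4 * (1 / Real.exp 2) := by ring
        rw [this]; nlinarith [hE2i]
      have h2e : 2 * L / Real.exp 1 ≤ 2 * L * 0.368 := by
        have : 2 * L / Real.exp 1 = (2 * L) * (1 / Real.exp 1) := by ring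
        rw [this]; nlinarith [hEi, hLpos]
      have hf1 : L ^ 2 + (4 / Real.exp 2 + 2 * L / Real.exp 1)
          ≤ L ^ 2 + 0.542 + 0.736 * L := by linarith [h4e, h2e]
      have hpos1 : (0:ℝ) ≤ L ^ 2 + (4 / Real.exp 2 + 2 * L / Real.exp 1) := by positivity
      have hmain : (L ^ 2 + (4 / Real.exp 2 + 2 * L / Real.exp 1)) * Real.log 2
          ≤ (L ^ 2 + 0.542 + 0.736 * L) * 0.6931471808 := by
        apply mul_le_mul hf1 hln2lt.le hln2pos.le
        nlinarith [hLpos, hL23]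
      have hpoly : (L ^ 2 + 0.542 + 0.736 * L) * 0.6931471808 ≤ L ^ 2 := by
        nlinarith [sq_nonneg (L - 2.3), hL23]
      linarith
    linarith

set_option maxHeartbeats 2000000 in
lemma mgf_bound {α : Type*} [Fintype α] (P k : α → ℝ)
    (hP0 : ∀ a, 0 ≤ P a) (hP1 : ∑ a, P a = 1) (hk : ∀ a, k a ≤ 0)
    {t : ℝ} (ht : 0 ≤ t) :
    ∑ a, P a * Real.exp (t * k a) ≤
      Real.exp (t * (∑ a, P a * k a) + t ^ 2 * (∑ a, P a * (k a) ^ 2) / 2) := by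
  classical
  set μ : ℝ := ∑ a, P a * k a with hμdef
  set s : ℝ := ∑ a, P a * (k a) ^ 2 with hsdef
  have hs0 : 0 ≤ s := Finset.sum_nonneg (fun a _ => by
    have := hP0 a; positivity)
  set f : ℝ → ℝ := fun u => ∑ a, P a * Real.exp (u * k a) with hfdef
  set f1 : ℝ → ℝ := fun u => ∑ a, P a * k a * Real.exp (u * k a) with hf1def
  set f2 : ℝ → ℝ := fun u => ∑ a, P a * (k a) ^ 2 * Real.exp (u * k a) with hf2def
  have hfd : ∀ u, HasDerivAt f (f1 u) u := by
    intro u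
    apply HasDerivAt.fun_sum
    intro a _
    have h1 : HasDerivAt (fun v : ℝ => v * k a) (k a) u := hasDerivAt_mul_const (k a)
    have h2 := h1.exp
    have h3 := h2.const_mul (P a)
    convert h3 using 1
    exacts [rfl, by ring]
  have hf1d : ∀ u, HasDerivAt f1 (f2 u) u := by
    intro u
    apply HasDerivAt.fun_sum
    intro a _
    have h1 : HasDerivAt (fun v : ℝ => v * k a) (k a) u := hasDerivAt_mul_const (k a)
    have h2 := h1.exp
    have h3 := h2.const_mul (P a * k a)
    convert h3 using 1
    exacts [rfl, by ring]
  have hfpos : ∀ u, 0 < f u := by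
    intro u
    obtain ⟨a0, ha0⟩ : ∃ a, 0 < P a := by
      by_contra h
      push_neg at h
      have : ∑ a, P a ≤ 0 := Finset.sum_nonpos (fun a _ => h a)
      rw [hP1] at this; linarith
    have h1 : P a0 * Real.exp (u * k a0) ≤ f u :=
      Finset.single_le_sum (f := fun a => P a * Real.exp (u * k a))
        (fun a _ => mul_nonneg (hP0 a) (Real.exp_pos _).le) (mem_univ a0)
    have h2 : 0 < P a0 * Real.exp (u * k a0) := by positivity
    linarith
  have hf2nn : ∀ u, 0 ≤ f2 u := fun u =>
    Finset.sum_nonneg (fun a _ => by have := hP0 a; positivity)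
  -- Chebyshev step : f2 u ≤ s * f u for u ≥ 0
  have hcheb : ∀ u, 0 ≤ u → f2 u ≤ s * f u := by
    intro u hu
    have key : ∀ a b : α,
        0 ≤ (P a * P b) * (((k a) ^ 2 - (k b) ^ 2) *
          (Real.exp (u * k b) - Real.exp (u * k a))) := by
      intro a b
      have hPP : 0 ≤ P a * P b := mul_nonneg (hP0 a) (hP0 b)
      rcases le_total (k a) (k b) with h | h
      · have h1 : (k b) ^ 2 ≤ (k a) ^ 2 := by nlinarith [hk a, hk b]
        have h2 : Real.exp (u * k a) ≤ Real.exp (u * k b) :=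
          Real.exp_le_exp.2 (mul_le_mul_of_nonneg_left h hu)
        exact mul_nonneg hPP (mul_nonneg (by linarith) (by linarith))
      · have h1 : (k a) ^ 2 ≤ (k b) ^ 2 := by nlinarith [hk a, hk b]
        have h2 : Real.exp (u * k b) ≤ Real.exp (u * k a) :=
          Real.exp_le_exp.2 (mul_le_mul_of_nonneg_left h hu)
        have h3 : (0:ℝ) ≤ ((k a) ^ 2 - (k b) ^ 2) *
            (Real.exp (u * k b) - Real.exp (u * k a)) := by nlinarith
        exact mul_nonneg hPP h3
    have hsumnn : 0 ≤ ∑ a, ∑ b, (P a * P b) * (((k a) ^ 2 - (k b) ^ 2) *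
        (Real.exp (u * k b) - Real.exp (u * k a))) :=
      Finset.sum_nonneg (fun a _ => Finset.sum_nonneg (fun b _ => key a b))
    have hexpand : ∑ a, ∑ b, (P a * P b) * (((k a) ^ 2 - (k b) ^ 2) *
        (Real.exp (u * k b) - Real.exp (u * k a)))
        = 2 * (s * f u) - 2 * (f2 u * ∑ a, P a) := by
      have e1 : s * f u = ∑ a, ∑ b, (P a * (k a) ^ 2) * (P b * Real.exp (u * k b)) :=
        Finset.sum_mul_sum _ _ _ _
      have e2 : f u * s = ∑ a, ∑ b, (P a * Real.exp (u * k a)) * (P b * (k b) ^ 2) :=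
        Finset.sum_mul_sum _ _ _ _
      have e3 : f2 u * (∑ a, P a) = ∑ a, ∑ b, (P a * (k a) ^ 2 * Real.exp (u * k a)) * P b :=
        Finset.sum_mul_sum _ _ _ _
      have e4 : (∑ a, P a) * f2 u = ∑ a, ∑ b, P a * (P b * (k b) ^ 2 * Real.exp (u * k b)) :=
        Finset.sum_mul_sum _ _ _ _
      have hgoal : (2:ℝ) * (s * f u) - 2 * (f2 u * ∑ a, P a)
          = (s * f u + f u * s) - (f2 u * (∑ a, P a) + (∑ a, P a) * f2 u) := by ring
      rw [hgoal, e1, e2, e3, e4, ← Finset.sum_add_distrib, ← Finset.sum_add_distrib,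
        ← Finset.sum_sub_distrib]
      apply Finset.sum_congr rfl
      intro a _
      rw [← Finset.sum_add_distrib, ← Finset.sum_add_distrib, ← Finset.sum_sub_distrib]
      apply Finset.sum_congr rfl
      intro b _
      ring
    rw [hexpand, hP1, mul_one] at hsumnn
    linarith
  -- the derivative of the log-mgf shifted
  set Φ : ℝ → ℝ := fun u => f1 u / f u - (μ + s * u) with hΦdef
  have hΦd : ∀ u, HasDerivAt Φ ((f2 u * f u - f1 u * f1 u) / (f u) ^ 2 - s) u := by
    intro u
    have h1 := (hf1d u).div (hfd u) (ne_of_gt (hfpos u))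
    have h2 : HasDerivAt (fun v : ℝ => μ + s * v) s u := by
      have := (hasDerivAt_id u).const_mul s
      simpa using this.const_add μ
    exact h1.sub h2
  have hΦderiv_nonpos : ∀ u, 0 ≤ u → (f2 u * f u - f1 u * f1 u) / (f u) ^ 2 - s ≤ 0 := by
    intro u hu
    have hfu := hfpos u
    have hnum : f2 u * f u - f1 u * f1 u ≤ s * (f u) ^ 2 := by
      have h1 : f2 u * f u ≤ (s * f u) * f u :=
        mul_le_mul_of_nonneg_right (hcheb u hu) (le_of_lt hfu)
      nlinarith [sq_nonneg (f1 u)]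
    have : (f2 u * f u - f1 u * f1 u) / (f u) ^ 2 ≤ s := by
      rw [div_le_iff₀ (by positivity)]
      linarith
    linarith
  have hΦanti : AntitoneOn Φ (Set.Ici (0:ℝ)) := by
    apply antitoneOn_of_deriv_nonpos (convex_Ici 0)
    · exact fun u hu => (hΦd u).differentiableAt.continuousAt.continuousWithinAt
    · intro u hu
      exact (hΦd u).differentiableAt.differentiableWithinAt
    · intro u hu
      rw [interior_Ici] at hu
      rw [(hΦd u).deriv]
      exact hΦderiv_nonpos u (le_of_lt hu)
  have hΦ0 : Φ 0 = 0 := by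
    have hf0 : f 0 = 1 := by
      simp only [hfdef, zero_mul, Real.exp_zero, mul_one]
      exact hP1
    have hf10 : f1 0 = μ := by
      simp only [hf1def, zero_mul, Real.exp_zero, mul_one, hμdef]
    simp [hΦdef, hf0, hf10]
  have hΦle : ∀ u, 0 ≤ u → Φ u ≤ 0 := by
    intro u hu
    have := hΦanti (Set.self_mem_Ici) (Set.mem_Ici.2 hu) hu
    rw [hΦ0] at this
    exact this
  -- second antitone pass
  set Ψ : ℝ → ℝ := fun u => Real.log (f u) - (μ * u + s * u ^ 2 / 2) with hΨdef
  have hΨd : ∀ u, HasDerivAt Ψ (Φ u) u := by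
    intro u
    have h1 := (hfd u).log (ne_of_gt (hfpos u))
    have h2 : HasDerivAt (fun v : ℝ => μ * v + s * v ^ 2 / 2) (μ + s * u) u := by
      have ha : HasDerivAt (fun v : ℝ => μ * v) μ u := by
        simpa using (hasDerivAt_id u).const_mul μ
      have hb : HasDerivAt (fun v : ℝ => v ^ 2) (2 * u) u := by
        simpa using hasDerivAt_pow 2 u
      have hc := (hb.const_mul s).div_const 2
      have := ha.add hc
      convert this using 1
      exacts [rfl, rfl, rfl, by ring]
    exact h1.sub h2
  have hΨanti : AntitoneOn Ψ (Set.Ici (0:ℝ)) := by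
    apply antitoneOn_of_deriv_nonpos (convex_Ici 0)
    · exact fun u hu => (hΨd u).differentiableAt.continuousAt.continuousWithinAt
    · intro u hu
      exact (hΨd u).differentiableAt.differentiableWithinAt
    · intro u hu
      rw [interior_Ici] at hu
      rw [(hΨd u).deriv]
      exact hΦle u (le_of_lt hu)
  have hΨ0 : Ψ 0 = 0 := by
    have hf0 : f 0 = 1 := by
      simp only [hfdef, zero_mul, Real.exp_zero, mul_one]
      exact hP1
    simp [hΨdef, hf0]
  have hΨt : Ψ t ≤ 0 := by
    have := hΨanti (Set.self_mem_Ici) (Set.mem_Ici.2 ht) ht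
    rw [hΨ0] at this
    exact this
  have hlog : Real.log (f t) ≤ μ * t + s * t ^ 2 / 2 := by
    have : Real.log (f t) - (μ * t + s * t ^ 2 / 2) ≤ 0 := hΨt
    linarith
  have := (Real.log_le_iff_le_exp (hfpos t)).1 hlog
  calc ∑ a, P a * Real.exp (t * k a) = f t := rfl
    _ ≤ Real.exp (μ * t + s * t ^ 2 / 2) := this
    _ = Real.exp (t * μ + t ^ 2 * s / 2) := by ring_nf

set_option maxHeartbeats 1000000 in
lemma condVar {X Y : Type*} [Fintype X] [Fintype Y] [Nonempty X] (P : X × Y → ℝ)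
    (h0 : ∀ z, 0 ≤ P z) (h1 : ∑ z : X × Y, P z = 1) :
    ∑ z : X × Y, P z * (Real.log (P z / ∑ x : X, P (x, z.2))) ^ 2
      ≤ (Real.log ((Fintype.card X : ℝ) + 3)) ^ 2 / Real.log 2 := by
  classical
  set V : ℝ := (Real.log ((Fintype.card X : ℝ) + 3)) ^ 2 / Real.log 2 with hVdef
  have hVnn : 0 ≤ V := by
    rw [hVdef]
    have : 0 < Real.log 2 := Real.log_pos one_lt_two
    positivity
  have hstep : ∀ y : Y, ∑ x : X, P (x, y) * (Real.log (P (x, y) / ∑ x' : X, P (x', y))) ^ 2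
      ≤ (∑ x : X, P (x, y)) * V := by
    intro y
    set S : ℝ := ∑ x : X, P (x, y) with hSdef
    have hSnn : 0 ≤ S := Finset.sum_nonneg (fun x _ => h0 _)
    rcases eq_or_lt_of_le hSnn with hS | hS
    · have hzero : ∀ x : X, P (x, y) = 0 := by
        intro x
        have := (Finset.sum_eq_zero_iff_of_nonneg (fun x _ => h0 ((x : X), y))).1 hS.symm
        exact this x (mem_univ x)
      rw [show ∑ x : X, P (x, y) * (Real.log (P (x, y) / S)) ^ 2 = 0 from
        Finset.sum_eq_zero (fun x _ => by rw [hzero x]; ring)]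
      positivity
    · have hq0 : ∀ x : X, 0 ≤ P (x, y) / S := fun x => div_nonneg (h0 _) hSnn
      have hq1 : ∑ x : X, P (x, y) / S = 1 := by
        rw [← Finset.sum_div, ← hSdef, div_self (ne_of_gt hS)]
      have hvb := varBound (fun x => P (x, y) / S) hq0 hq1
      have hmul := mul_le_mul_of_nonneg_left hvb (le_of_lt hS)
      calc ∑ x : X, P (x, y) * (Real.log (P (x, y) / S)) ^ 2
          = S * ∑ x : X, (P (x, y) / S) * (Real.log (P (x, y) / S)) ^ 2 := by
            rw [Finset.mul_sum]
            apply Finset.sum_congr rfl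
            intro x _
            rw [show S * (P (x, y) / S * Real.log (P (x, y) / S) ^ 2)
              = (S * (P (x, y) / S)) * Real.log (P (x, y) / S) ^ 2 by ring,
              mul_div_cancel₀ _ (ne_of_gt hS)]
        _ ≤ S * V := hmul
  calc ∑ z : X × Y, P z * (Real.log (P z / ∑ x : X, P (x, z.2))) ^ 2
      = ∑ y : Y, ∑ x : X, P (x, y) * (Real.log (P (x, y) / ∑ x' : X, P (x', y))) ^ 2 := by
        rw [Fintype.sum_prod_type_right]
    _ ≤ ∑ y : Y, (∑ x : X, P (x, y)) * V := Finset.sum_le_sum (fun y _ => hstep y)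
    _ = (∑ y : Y, ∑ x : X, P (x, y)) * V := by rw [Finset.sum_mul]
    _ = V := by
        rw [← Fintype.sum_prod_type_right, h1, one_mul]

set_option maxHeartbeats 2000000 in
theorem prob_surprisal_small_upper_bound
    {X Y : Type*} [Fintype X] [Fintype Y] [Nonempty X] [Nonempty Y]
    (n : ℕ) (hn : 1 ≤ n) (P : Fin n → X × Y → ℝ)
    (hP0 : ∀ i, ∀ z, 0 ≤ P i z) (hP1 : ∀ i, ∑ z : X × Y, P i z = 1)
    (δ : ℝ) (hδ0 : 0 ≤ δ) (hδ1 : δ ≤ Real.logb 2 (Fintype.card X)) :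
    ∑ z ∈ Finset.univ.filter
        (fun z : (Fin n → X) × (Fin n → Y) =>
          -Real.logb 2 (∏ i, P i (z.1 i, z.2 i) / (∑ x : X, P i (x, z.2 i))) ≤
            (∑ i, condEntropy' (P i)) - n * δ),
        (∏ i, P i (z.1 i, z.2 i))
      ≤ 2 ^ (-(n * δ ^ 2) / (2 * (Real.logb 2 (Fintype.card X + 3)) ^ 2)) := by
  classical
  have hln2pos : 0 < Real.log 2 := Real.log_pos one_lt_two
  set M := Fintype.card X with hMdef
  have hM1 : 1 ≤ M := Fintype.card_pos
  have hMr : (1 : ℝ) ≤ (M : ℝ) := by exact_mod_cast hM1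
  set L : ℝ := Real.log ((M : ℝ) + 3) with hLdef
  have hLpos : 0 < L := Real.log_pos (by linarith)
  set V : ℝ := L ^ 2 / Real.log 2 with hVdef
  have hVpos : 0 < V := by positivity
  set t : ℝ := δ * Real.log 2 / V with htdef
  have ht0 : 0 ≤ t := by positivity
  set k : Fin n → X × Y → ℝ :=
    fun i z => Real.log (P i z / ∑ x : X, P i (x, z.2)) with hkdef
  have hq0 : ∀ i (z : X × Y), 0 ≤ P i z / ∑ x : X, P i (x, z.2) := fun i z =>
    div_nonneg (hP0 i z) (Finset.sum_nonneg fun x _ => hP0 i _)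
  have hq1 : ∀ i (z : X × Y), P i z / (∑ x : X, P i (x, z.2)) ≤ 1 := by
    intro i z
    have hSnn : (0:ℝ) ≤ ∑ x : X, P i (x, z.2) :=
      Finset.sum_nonneg (fun x _ => hP0 i (x, z.2))
    rcases eq_or_lt_of_le hSnn with h | h
    · rw [← h]; simp
    · rw [div_le_one h]
      have := Finset.single_le_sum (fun (x : X) _ => hP0 i (x, z.2)) (mem_univ z.1)
      simpa using this
  have hk0 : ∀ i (z : X × Y), k i z ≤ 0 := fun i z =>
    Real.log_nonpos (hq0 i z) (hq1 i z)
  -- mean identity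
  have hμ : ∀ i, ∑ z : X × Y, P i z * k i z = -(Real.log 2 * condEntropy' (P i)) := by
    intro i
    rw [condEntropy', mul_neg, neg_neg, Finset.mul_sum]
    apply Finset.sum_congr rfl
    intro z _
    simp only [hkdef, Real.logb]
    field_simp
  -- variance bound
  have hσ : ∀ i, ∑ z : X × Y, P i z * (k i z) ^ 2 ≤ V := by
    intro i
    have := condVar (P i) (hP0 i) (hP1 i)
    simpa [hkdef, hVdef, hLdef] using this
  -- mgf bound
  have hmgf : ∀ i, ∑ z : X × Y, P i z * Real.exp (t * k i z)
      ≤ Real.exp (t * (∑ z : X × Y, P i z * k i z)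
          + t ^ 2 * (∑ z : X × Y, P i z * (k i z) ^ 2) / 2) :=
    fun i => mgf_bound (P i) (k i) (hP0 i) (hP1 i) (hk0 i) ht0
  set A : ℝ := (∑ i, condEntropy' (P i)) - n * δ with hAdef
  -- pointwise Chernoff
  have hpoint : ∀ z : (Fin n → X) × (Fin n → Y),
      (-Real.logb 2 (∏ i, P i (z.1 i, z.2 i) / (∑ x : X, P i (x, z.2 i))) ≤ A) →
      (∏ i, P i (z.1 i, z.2 i))
        ≤ Real.exp (t * A * Real.log 2) *
          ∏ i, (P i (z.1 i, z.2 i) * Real.exp (t * k i (z.1 i, z.2 i))) := by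
    intro z hcond
    rcases eq_or_lt_of_le (Finset.prod_nonneg (fun i _ => hP0 i (z.1 i, z.2 i)) :
        (0:ℝ) ≤ ∏ i, P i (z.1 i, z.2 i)) with hw | hw
    · rw [← hw]
      have : 0 ≤ ∏ i, (P i (z.1 i, z.2 i) * Real.exp (t * k i (z.1 i, z.2 i))) :=
        Finset.prod_nonneg (fun i _ => mul_nonneg (hP0 i _) (Real.exp_pos _).le)
      positivity
    · have hPpos : ∀ i, 0 < P i (z.1 i, z.2 i) := by
        intro i
        rcases (hP0 i (z.1 i, z.2 i)).lt_or_eq with h | h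
        · exact h
        · exfalso
          have : ∏ i, P i (z.1 i, z.2 i) = 0 :=
            Finset.prod_eq_zero (mem_univ i) h.symm
          rw [this] at hw; exact lt_irrefl 0 hw
      have hqpos : ∀ i, 0 < P i (z.1 i, z.2 i) / (∑ x : X, P i (x, z.2 i)) := by
        intro i
        apply div_pos (hPpos i)
        have h1 := Finset.single_le_sum (fun (x : X) _ => hP0 i (x, z.2 i)) (mem_univ (z.1 i))
        exact lt_of_lt_of_le (hPpos i) h1
      have hlogr : Real.log (∏ i, P i (z.1 i, z.2 i) / (∑ x : X, P i (x, z.2 i)))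
          = ∑ i, k i (z.1 i, z.2 i) := by
        rw [Real.log_prod (fun i _ => ne_of_gt (hqpos i))]
      have hsum_k : -(A * Real.log 2) ≤ ∑ i, k i (z.1 i, z.2 i) := by
        rw [← hlogr]
        have h2 : -(Real.log (∏ i, P i (z.1 i, z.2 i) / (∑ x : X, P i (x, z.2 i)))
            / Real.log 2) ≤ A := by
          simpa [Real.logb] using hcond
        have h3 : -A ≤ Real.log (∏ i, P i (z.1 i, z.2 i) / (∑ x : X, P i (x, z.2 i)))
            / Real.log 2 := by linarith
        have h4 := (le_div_iff₀ hln2pos).1 h3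
        linarith
      have hexp1 : (1:ℝ) ≤ Real.exp (t * A * Real.log 2)
          * Real.exp (t * ∑ i, k i (z.1 i, z.2 i)) := by
        rw [← Real.exp_add, ← Real.exp_zero]
        apply Real.exp_le_exp.2
        have h4 : 0 ≤ t * (A * Real.log 2 + ∑ i, k i (z.1 i, z.2 i)) :=
          mul_nonneg ht0 (by linarith)
        nlinarith [h4]
      calc ∏ i, P i (z.1 i, z.2 i)
          = (∏ i, P i (z.1 i, z.2 i)) * 1 := by ring
        _ ≤ (∏ i, P i (z.1 i, z.2 i)) *
            (Real.exp (t * A * Real.log 2) * Real.exp (t * ∑ i, k i (z.1 i, z.2 i))) :=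
            mul_le_mul_of_nonneg_left hexp1 hw.le
        _ = Real.exp (t * A * Real.log 2) *
            ∏ i, (P i (z.1 i, z.2 i) * Real.exp (t * k i (z.1 i, z.2 i))) := by
            rw [Finset.prod_mul_distrib, Finset.mul_sum, Real.exp_sum]
            ring
  -- sum-product swap
  set g : Fin n → X × Y → ℝ := fun i u => P i u * Real.exp (t * k i u) with hgdef
  have hswap : ∑ z : (Fin n → X) × (Fin n → Y), ∏ i, g i (z.1 i, z.2 i)
      = ∏ i, ∑ u : X × Y, g i u := by
    have h1 : ∏ i, ∑ u ∈ (univ : Finset (X × Y)), g i u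
        = ∑ p ∈ Fintype.piFinset (fun _ : Fin n => (univ : Finset (X × Y))),
            ∏ i, g i (p i) := Finset.prod_univ_sum _ _
    rw [Fintype.piFinset_univ] at h1
    rw [h1]
    exact Fintype.sum_equiv (Equiv.arrowProdEquivProdArrow (Fin n) (fun _ => X) (fun _ => Y)).symm _ _
      (fun z => by
        apply Finset.prod_congr rfl
        intro i _
        rfl)
  -- assemble
  have hsum1 : ∑ z ∈ Finset.univ.filter
        (fun z : (Fin n → X) × (Fin n → Y) =>
          -Real.logb 2 (∏ i, P i (z.1 i, z.2 i) / (∑ x : X, P i (x, z.2 i))) ≤ A),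
        (∏ i, P i (z.1 i, z.2 i))
      ≤ Real.exp (t * A * Real.log 2) * ∏ i, ∑ u : X × Y, g i u := by
    calc ∑ z ∈ Finset.univ.filter
          (fun z : (Fin n → X) × (Fin n → Y) =>
            -Real.logb 2 (∏ i, P i (z.1 i, z.2 i) / (∑ x : X, P i (x, z.2 i))) ≤ A),
          (∏ i, P i (z.1 i, z.2 i))
        ≤ ∑ z ∈ Finset.univ.filter
          (fun z : (Fin n → X) × (Fin n → Y) =>
            -Real.logb 2 (∏ i, P i (z.1 i, z.2 i) / (∑ x : X, P i (x, z.2 i))) ≤ A),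
          (Real.exp (t * A * Real.log 2) * ∏ i, g i (z.1 i, z.2 i)) := by
          apply Finset.sum_le_sum
          intro z hz
          exact hpoint z (Finset.mem_filter.1 hz).2
      _ ≤ ∑ z : (Fin n → X) × (Fin n → Y),
          (Real.exp (t * A * Real.log 2) * ∏ i, g i (z.1 i, z.2 i)) := by
          apply Finset.sum_le_sum_of_subset_of_nonneg (Finset.filter_subset _ _)
          intro z _ _
          apply mul_nonneg (Real.exp_pos _).le
          exact Finset.prod_nonneg (fun i _ => mul_nonneg (hP0 i _) (Real.exp_pos _).le)
      _ = Real.exp (t * A * Real.log 2)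
            * ∑ z : (Fin n → X) × (Fin n → Y), ∏ i, g i (z.1 i, z.2 i) := by
          rw [Finset.mul_sum]
      _ = Real.exp (t * A * Real.log 2) * ∏ i, ∑ u : X × Y, g i u := by rw [hswap]
  -- bound the product of mgfs
  have hprod : ∏ i, ∑ u : X × Y, g i u
      ≤ Real.exp (∑ i, (t * (∑ z : X × Y, P i z * k i z)
          + t ^ 2 * (∑ z : X × Y, P i z * (k i z) ^ 2) / 2)) := by
    rw [Real.exp_sum]
    apply Finset.prod_le_prod
    · intro i _
      exact Finset.sum_nonneg (fun u _ => mul_nonneg (hP0 i _) (Real.exp_pos _).le)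
    · intro i _
      exact hmgf i
  -- final exponent computation
  have hexpfinal : t * A * Real.log 2 + ∑ i, (t * (∑ z : X × Y, P i z * k i z)
      + t ^ 2 * (∑ z : X × Y, P i z * (k i z) ^ 2) / 2)
      ≤ Real.log 2 * (-((n : ℝ) * δ ^ 2) / (2 * (L / Real.log 2) ^ 2)) := by
    have hsplit : ∑ i, (t * (∑ z : X × Y, P i z * k i z)
        + t ^ 2 * (∑ z : X × Y, P i z * (k i z) ^ 2) / 2)
        = t * (∑ i, ∑ z : X × Y, P i z * k i z)
          + t ^ 2 * (∑ i, ∑ z : X × Y, P i z * (k i z) ^ 2) / 2 := by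
      rw [Finset.sum_add_distrib, ← Finset.mul_sum, ← Finset.sum_div, ← Finset.mul_sum]
    have hμsum : ∑ i, ∑ z : X × Y, P i z * k i z
        = -(Real.log 2 * ∑ i, condEntropy' (P i)) := by
      rw [Finset.mul_sum, ← Finset.sum_neg_distrib]
      exact Finset.sum_congr rfl (fun i _ => hμ i)
    have hσsum : ∑ i, ∑ z : X × Y, P i z * (k i z) ^ 2 ≤ (n : ℝ) * V := by
      have := Finset.sum_le_card_nsmul (univ : Finset (Fin n))
        (fun i => ∑ z : X × Y, P i z * (k i z) ^ 2) V (fun i _ => hσ i)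
      simpa [nsmul_eq_mul] using this
    rw [hsplit, hμsum]
    have hstep2 : t ^ 2 * (∑ i, ∑ z : X × Y, P i z * (k i z) ^ 2) / 2
        ≤ t ^ 2 * ((n : ℝ) * V) / 2 := by
      gcongr
    have hA2 : t * A * Real.log 2 + t * -(Real.log 2 * ∑ i, condEntropy' (P i))
        = -(t * (n : ℝ) * δ * Real.log 2) := by
      rw [hAdef]; ring
    have hfinal_eq : -(t * (n : ℝ) * δ * Real.log 2) + t ^ 2 * ((n : ℝ) * V) / 2
        = Real.log 2 * (-((n : ℝ) * δ ^ 2) / (2 * (L / Real.log 2) ^ 2)) := by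
      rw [htdef, hVdef]
      field_simp
      ring
    calc t * A * Real.log 2 + (t * -(Real.log 2 * ∑ i, condEntropy' (P i))
          + t ^ 2 * (∑ i, ∑ z : X × Y, P i z * (k i z) ^ 2) / 2)
        ≤ t * A * Real.log 2 + (t * -(Real.log 2 * ∑ i, condEntropy' (P i))
          + t ^ 2 * ((n : ℝ) * V) / 2) := by linarith [hstep2]
      _ = -(t * (n : ℝ) * δ * Real.log 2) + t ^ 2 * ((n : ℝ) * V) / 2 := by
          rw [← hA2]; ring
      _ = Real.log 2 * (-((n : ℝ) * δ ^ 2) / (2 * (L / Real.log 2) ^ 2)) := hfinal_eq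
  -- put it together
  have hrhs : (2 : ℝ) ^ (-((n : ℝ) * δ ^ 2) / (2 * (Real.logb 2 ((M : ℝ) + 3)) ^ 2))
      = Real.exp (Real.log 2 * (-((n : ℝ) * δ ^ 2) / (2 * (L / Real.log 2) ^ 2))) := by
    rw [Real.rpow_def_of_pos two_pos]
    simp only [Real.logb]
    rfl
  calc ∑ z ∈ Finset.univ.filter
        (fun z : (Fin n → X) × (Fin n → Y) =>
          -Real.logb 2 (∏ i, P i (z.1 i, z.2 i) / (∑ x : X, P i (x, z.2 i))) ≤ A),
        (∏ i, P i (z.1 i, z.2 i))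
      ≤ Real.exp (t * A * Real.log 2) * ∏ i, ∑ u : X × Y, g i u := hsum1
    _ ≤ Real.exp (t * A * Real.log 2) * Real.exp (∑ i, (t * (∑ z : X × Y, P i z * k i z)
          + t ^ 2 * (∑ z : X × Y, P i z * (k i z) ^ 2) / 2)) :=
        mul_le_mul_of_nonneg_left hprod (Real.exp_pos _).le
    _ = Real.exp (t * A * Real.log 2 + ∑ i, (t * (∑ z : X × Y, P i z * k i z)
          + t ^ 2 * (∑ z : X × Y, P i z * (k i z) ^ 2) / 2)) := by
        rw [← Real.exp_add]
    _ ≤ Real.exp (Real.log 2 * (-((n : ℝ) * δ ^ 2) / (2 * (L / Real.log 2) ^ 2))) :=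
        Real.exp_le_exp.2 hexpfinal
    _ = 2 ^ (-((n : ℝ) * δ ^ 2) / (2 * (Real.logb 2 ((M : ℝ) + 3)) ^ 2)) := hrhs.symm
end

section
/- Let P_{XY} be a probability distribution on finite sets 𝒳 × 𝒴. Then for any t ∈ ℝ with |t| ≤ 1/log(|𝒳|+3), log(E_{(x,y)←P_{XY}}[P_{X|Y}(x,y)^{−t}]) ≤ t·H(X|Y) + (1/2)·t²·log²(|𝒳|+3), where the expectation is taken over pairs (x,y) chosen according to P_{XY} (restricted to pairs of positive probability). -/
open Finset Real

lemma aux_lin (x : ℝ) : x * Real.exp (-x) ≤ Real.exp (-1) := by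
  have h : x ≤ Real.exp (x - 1) := by
    have := Real.add_one_le_exp (x - 1); linarith
  have hpos : 0 < Real.exp (-x) := Real.exp_pos _
  calc x * Real.exp (-x) ≤ Real.exp (x - 1) * Real.exp (-x) :=
        mul_le_mul_of_nonneg_right h hpos.le
    _ = Real.exp (-1) := by rw [← Real.exp_add]; ring_nf

lemma aux_sq (x : ℝ) (hx : 0 ≤ x) : x ^ 2 * Real.exp (-x) ≤ 4 * Real.exp (-2) := by
  have h : x / 2 ≤ Real.exp ((x - 2) / 2) := by
    have := Real.add_one_le_exp ((x - 2) / 2); linarith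
  have h2 : (x / 2) ^ 2 ≤ Real.exp ((x - 2) / 2) ^ 2 :=
    pow_le_pow_left₀ (by linarith : (0:ℝ) ≤ x / 2) h 2
  have h3 : Real.exp ((x - 2) / 2) ^ 2 = Real.exp (x - 2) := by
    rw [← Real.exp_nat_mul]; norm_num; try ring_nf
  have h4 : x ^ 2 / 4 ≤ Real.exp (x - 2) := by rw [← h3]; nlinarith [h2]
  have hpos : 0 < Real.exp (-x) := Real.exp_pos _
  have h5 : Real.exp (x - 2) * Real.exp (-x) = Real.exp (-2) := by
    rw [← Real.exp_add]; ring_nf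
  nlinarith [mul_le_mul_of_nonneg_right h4 hpos.le]

lemma entropy_le {ι : Type*} (T : Finset ι) (hT : T.Nonempty) (q : ι → ℝ)
    (hq : ∀ x ∈ T, 0 < q x) (h1 : ∑ x ∈ T, q x = 1) :
    ∑ x ∈ T, q x * (-Real.log (q x)) ≤ Real.log T.card := by
  have hk0 : (0:ℝ) < T.card := by exact_mod_cast Finset.card_pos.mpr hT
  have key : ∀ x ∈ T, q x * (-Real.log (q x)) ≤ q x * Real.log T.card + (1 / T.card - q x) := by
    intro x hx
    have hqx := hq x hx
    have hlog : Real.log ((q x * T.card)⁻¹) ≤ (q x * T.card)⁻¹ - 1 :=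
      Real.log_le_sub_one_of_pos (by positivity)
    rw [Real.log_inv, Real.log_mul (ne_of_gt hqx) (ne_of_gt hk0)] at hlog
    have h2 : -Real.log (q x) ≤ Real.log T.card + (q x * T.card)⁻¹ - 1 := by linarith
    have h3 : q x * (-Real.log (q x)) ≤ q x * (Real.log T.card + (q x * T.card)⁻¹ - 1) :=
      mul_le_mul_of_nonneg_left h2 hqx.le
    have h4 : q x * (q x * T.card)⁻¹ = 1 / T.card := by field_simp
    nlinarith [h3, h4]
  calc ∑ x ∈ T, q x * (-Real.log (q x))
      ≤ ∑ x ∈ T, (q x * Real.log T.card + (1 / T.card - q x)) := Finset.sum_le_sum key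
    _ = Real.log T.card := by
        rw [Finset.sum_add_distrib, ← Finset.sum_mul, h1, Finset.sum_sub_distrib, h1]
        simp [Finset.sum_const, hk0.ne']

lemma log_five : (1.6:ℝ) ≤ Real.log 5 := by
  rw [Real.le_log_iff_exp_le (by norm_num : (0:ℝ) < 5)]
  have h8 : Real.exp 1.6 ^ (5:ℕ) = Real.exp 8 := by
    rw [← Real.exp_nat_mul]; norm_num
  have he : Real.exp 8 < 3125 := by
    have h1 : Real.exp 8 = Real.exp 1 ^ (8:ℕ) := by
      rw [← Real.exp_nat_mul]; norm_num
    have h2 : Real.exp 1 ^ (8:ℕ) < 2.7182818286 ^ (8:ℕ) := by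
      apply pow_lt_pow_left₀ Real.exp_one_lt_d9 (Real.exp_pos 1).le
      norm_num
    nlinarith [h2, h1]
  have hlt : Real.exp 1.6 ^ (5:ℕ) < 5 ^ (5:ℕ) := by rw [h8]; norm_num; linarith
  have := lt_of_pow_lt_pow_left₀ 5 (by norm_num : (0:ℝ) ≤ 5) hlt
  linarith

lemma exp_neg_one_le : Real.exp (-1) ≤ 0.36787945 := by
  rw [Real.exp_neg]
  have h := Real.exp_one_gt_d9
  rw [inv_le_comm₀ (by positivity) (by norm_num)]
  linarith

lemma exp_neg_two_le : Real.exp (-2) ≤ 0.1353353 := by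
  have h : Real.exp (-2) = Real.exp (-1) * Real.exp (-1) := by
    rw [← Real.exp_add]; norm_num
  have := exp_neg_one_le
  have hp : 0 < Real.exp (-1) := Real.exp_pos _
  nlinarith

-- per-term bounds
lemma per_term_pos (c s u : ℝ) (hc16 : 1.6 ≤ c) (hu : 0 < u)
    (hsu : s * c ≤ Real.log 2) (hs0 : 0 ≤ s) :
    Real.exp ((s-1) * (2*c)) * (Real.exp ((s-1)*u) * (u^2 + 2*c*u))
      ≤ Real.exp (-(2*c)) * (52 * Real.exp (-2) + 15 * Real.exp (-1) * c) := by
  have hc0 : (0:ℝ) < c := by linarith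
  have hl2u : Real.log 2 < 0.6931471808 := Real.log_two_lt_d9
  have he1p : 0 < Real.exp (-1) := Real.exp_pos _
  have he2p : 0 < Real.exp (-2) := Real.exp_pos _
  have hf1 : Real.exp ((s-1) * (2*c)) ≤ 4 * Real.exp (-(2*c)) := by
    have h1 : (s-1) * (2*c) = 2*(s*c) + (-(2*c)) := by ring
    rw [h1, Real.exp_add]
    have h3 : 2*(s*c) ≤ 2 * Real.log 2 := by linarith
    have h2 : Real.exp (2*(s*c)) ≤ 4 := by
      calc Real.exp (2*(s*c)) ≤ Real.exp (2 * Real.log 2) := Real.exp_le_exp.mpr h3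
        _ = 4 := by
            rw [two_mul, Real.exp_add, Real.exp_log (by norm_num : (0:ℝ) < 2)]
            norm_num
    nlinarith [Real.exp_pos (-(2*c))]
  have hsmall : s ≤ 0.44 := by
    have h1 : s * (1.6:ℝ) ≤ s * c := mul_le_mul_of_nonneg_left hc16 hs0
    nlinarith
  have hf2 : Real.exp ((s-1)*u) ≤ Real.exp (-(0.56*u)) := by
    apply Real.exp_le_exp.mpr
    nlinarith [mul_nonneg (by linarith : (0:ℝ) ≤ 0.44 - s) hu.le]
  have hsq : u^2 * Real.exp (-(0.56*u)) ≤ 13 * Real.exp (-2) := by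
    have := aux_sq (0.56*u) (by positivity)
    nlinarith
  have hlin : u * Real.exp (-(0.56*u)) ≤ (25/14) * Real.exp (-1) := by
    have := aux_lin (0.56*u)
    nlinarith
  have hf3 : Real.exp ((s-1)*u) * (u^2 + 2*c*u)
      ≤ 13 * Real.exp (-2) + (25/7) * Real.exp (-1) * c := by
    have hx2 : 0 ≤ u^2 + 2*c*u := by positivity
    have h1 : Real.exp ((s-1)*u) * (u^2 + 2*c*u)
        ≤ Real.exp (-(0.56*u)) * (u^2 + 2*c*u) :=
      mul_le_mul_of_nonneg_right hf2 hx2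
    have h3 : 2*c*(u * Real.exp (-(0.56*u))) ≤ 2*c*((25/14) * Real.exp (-1)) :=
      mul_le_mul_of_nonneg_left hlin (by positivity)
    nlinarith
  calc Real.exp ((s-1) * (2*c)) * (Real.exp ((s-1)*u) * (u^2 + 2*c*u))
      ≤ (4 * Real.exp (-(2*c))) * (13 * Real.exp (-2) + (25/7) * Real.exp (-1) * c) := by
        apply mul_le_mul hf1 hf3 (by positivity) (by positivity)
    _ ≤ Real.exp (-(2*c)) * (52 * Real.exp (-2) + 15 * Real.exp (-1) * c) := by
        have := Real.exp_pos (-(2*c))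
        nlinarith [mul_pos he1p hc0]

lemma per_term_neg (c s u : ℝ) (hc0 : 0 < c) (hu : 0 < u) (hs0 : s ≤ 0) :
    Real.exp ((s-1) * (2*c)) * (Real.exp ((s-1)*u) * (u^2 + 2*c*u))
      ≤ Real.exp (-(2*c)) * (4 * Real.exp (-2) + 2 * Real.exp (-1) * c) := by
  have hf1 : Real.exp ((s-1) * (2*c)) ≤ Real.exp (-(2*c)) := by
    apply Real.exp_le_exp.mpr
    nlinarith [mul_nonneg (by linarith : (0:ℝ) ≤ -s) hc0.le]
  have hf2 : Real.exp ((s-1)*u) ≤ Real.exp (-u) := by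
    apply Real.exp_le_exp.mpr
    nlinarith [mul_nonneg (by linarith : (0:ℝ) ≤ -s) hu.le]
  have hsq : u^2 * Real.exp (-u) ≤ 4 * Real.exp (-2) := aux_sq u hu.le
  have hlin : u * Real.exp (-u) ≤ Real.exp (-1) := aux_lin u
  have hf3 : Real.exp ((s-1)*u) * (u^2 + 2*c*u)
      ≤ 4 * Real.exp (-2) + 2 * Real.exp (-1) * c := by
    have hx2 : 0 ≤ u^2 + 2*c*u := by positivity
    have h1 : Real.exp ((s-1)*u) * (u^2 + 2*c*u)
        ≤ Real.exp (-u) * (u^2 + 2*c*u) :=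
      mul_le_mul_of_nonneg_right hf2 hx2
    have h3 : 2*c*(u * Real.exp (-u)) ≤ 2*c*Real.exp (-1) :=
      mul_le_mul_of_nonneg_left hlin (by positivity)
    nlinarith
  apply mul_le_mul hf1 hf3 (by positivity) (by positivity)

-- final numeric comparisons
lemma num_pos (c : ℝ) (hc16 : 1.6 ≤ c) :
    (1/16) * (52 * Real.exp (-2) + 15 * Real.exp (-1) * c) ≤ c^2 / Real.log 2 - c^2 := by
  have hl2 : (0:ℝ) < Real.log 2 := Real.log_pos (by norm_num)
  have hl2u : Real.log 2 < 0.6931471808 := Real.log_two_lt_d9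
  have he1 := exp_neg_one_le
  have he2 := exp_neg_two_le
  have he1p : 0 < Real.exp (-1) := Real.exp_pos _
  have he2p : 0 < Real.exp (-2) := Real.exp_pos _
  have hc0 : (0:ℝ) < c := by linarith
  have hb1 : 52 * Real.exp (-2) ≤ 7.04 := by nlinarith
  have hb2 : 15 * Real.exp (-1) * c ≤ 5.52 * c := by nlinarith
  have h0 : c^2 / Real.log 2 - c^2 = (c^2 - Real.log 2 * c^2) / Real.log 2 := by
    field_simp
  rw [h0, le_div_iff₀ hl2]
  have hK0 : 0 ≤ 52 * Real.exp (-2) + 15 * Real.exp (-1) * c := by positivity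
  have hKb : 52 * Real.exp (-2) + 15 * Real.exp (-1) * c ≤ 7.04 + 5.52 * c := by linarith
  have h1 : (1/16) * (52 * Real.exp (-2) + 15 * Real.exp (-1) * c) * Real.log 2
      ≤ (1/16) * (7.04 + 5.52 * c) * 0.6931471808 := by
    apply mul_le_mul (by linarith) hl2u.le hl2.le (by positivity)
  have h2 : (1/16) * (7.04 + 5.52 * c) * 0.6931471808 ≤ c^2 - Real.log 2 * c^2 := by
    have h3 : Real.log 2 * c^2 ≤ 0.6931471808 * c^2 := by nlinarith [sq_nonneg c]
    nlinarith [sq_nonneg (c - 1.6)]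
  linarith

lemma num_neg (c : ℝ) (hc16 : 1.6 ≤ c) :
    (1/16) * (4 * Real.exp (-2) + 2 * Real.exp (-1) * c)
      ≤ (c^2 / Real.log 2 - c^2) * (1 - Real.log 2) := by
  have hl2 : (0:ℝ) < Real.log 2 := Real.log_pos (by norm_num)
  have hl2u : Real.log 2 < 0.6931471808 := Real.log_two_lt_d9
  have he1 := exp_neg_one_le
  have he2 := exp_neg_two_le
  have he1p : 0 < Real.exp (-1) := Real.exp_pos _
  have he2p : 0 < Real.exp (-2) := Real.exp_pos _
  have hc0 : (0:ℝ) < c := by linarith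
  have h0 : (c^2 / Real.log 2 - c^2) * (1 - Real.log 2)
      = c^2 * (1 - Real.log 2)^2 / Real.log 2 := by
    field_simp
  rw [h0, le_div_iff₀ hl2]
  have hKb : 4 * Real.exp (-2) + 2 * Real.exp (-1) * c ≤ 0.55 + 0.74 * c := by nlinarith
  have hK0 : 0 ≤ 4 * Real.exp (-2) + 2 * Real.exp (-1) * c := by positivity
  have h1 : (1/16) * (4 * Real.exp (-2) + 2 * Real.exp (-1) * c) * Real.log 2
      ≤ (1/16) * (0.55 + 0.74 * c) * 0.6931471808 := by
    apply mul_le_mul (by linarith) hl2u.le hl2.le (by positivity)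
  have h2 : (0.3068528:ℝ) ≤ 1 - Real.log 2 := by linarith
  have h3 : (0.3068528:ℝ)^2 * c^2 ≤ (1 - Real.log 2)^2 * c^2 := by
    apply mul_le_mul_of_nonneg_right _ (sq_nonneg c)
    nlinarith
  have h4 : (1/16) * (0.55 + 0.74 * c) * 0.6931471808 ≤ (0.3068528:ℝ)^2 * c^2 := by
    nlinarith [sq_nonneg (c - 1.6)]
  nlinarith

lemma count_mul {a b e K : ℝ} (h1 : a ≤ b * (e * K)) (h2 : b * e ≤ 1/16)
    (hK : 0 ≤ K) : a ≤ (1/16) * K := by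
  nlinarith [mul_le_mul_of_nonneg_right h2 hK]

set_option maxHeartbeats 2000000 in
lemma key_y {ι : Type*} [DecidableEq ι] (n : ℕ) (T : Finset ι) (q : ι → ℝ)
    (hcard : T.card ≤ n)
    (hq0 : ∀ x ∈ T, 0 < q x) (hqs : ∑ x ∈ T, q x = 1)
    (s : ℝ) (hs : |s| ≤ Real.log 2 / Real.log ((n:ℝ) + 3)) :
    ∑ x ∈ T, q x * Real.exp (s * -Real.log (q x)) *
      ((-Real.log (q x) - Real.log ((n:ℝ) + 3)) ^ 2 - (Real.log ((n:ℝ) + 3)) ^ 2 / Real.log 2) ≤ 0 := by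
  have hT : T.Nonempty := Finset.nonempty_of_sum_ne_zero (by rw [hqs]; norm_num)
  have hn1 : 1 ≤ n := le_trans (Finset.card_pos.mpr hT) hcard
  set c : ℝ := Real.log ((n:ℝ) + 3) with hc
  have hl2 : (0:ℝ) < Real.log 2 := Real.log_pos (by norm_num)
  have hl2u : Real.log 2 < 0.6931471808 := Real.log_two_lt_d9
  have hc4 : Real.log 4 ≤ c := by
    apply Real.log_le_log (by norm_num)
    have : (1:ℝ) ≤ (n:ℝ) := by exact_mod_cast hn1
    linarith
  have hc0 : 0 < c := lt_of_lt_of_le (Real.log_pos (by norm_num)) hc4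
  have hl2c : Real.log 2 < c := lt_of_lt_of_le (Real.log_lt_log (by norm_num) (by norm_num)) hc4
  have hexpc : Real.exp c = (n:ℝ) + 3 := Real.exp_log (by positivity)
  have hlogn : Real.log (n:ℝ) ≤ c := by
    apply Real.log_le_log (by positivity)
    linarith
  have hlogcard : Real.log (T.card:ℝ) ≤ c := by
    apply le_trans _ hlogn
    apply Real.log_le_log (by exact_mod_cast Finset.card_pos.mpr hT)
    exact_mod_cast hcard
  have hlog5c : 2 ≤ n → (1.6:ℝ) ≤ c := by
    intro hn2
    have h5 : Real.log 5 ≤ c := by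
      apply Real.log_le_log (by norm_num)
      have : (2:ℝ) ≤ (n:ℝ) := by exact_mod_cast hn2
      linarith
    linarith [log_five]
  clear_value c
  clear hc
  obtain ⟨B, hB⟩ : ∃ B : ℝ, B = c ^ 2 / Real.log 2 := ⟨_, rfl⟩
  have hsu : s * c ≤ Real.log 2 := by
    have h1 : s ≤ Real.log 2 / c := le_trans (le_abs_self s) hs
    calc s * c ≤ (Real.log 2 / c) * c := mul_le_mul_of_nonneg_right h1 hc0.le
      _ = Real.log 2 := by field_simp
  have hsl : -(Real.log 2) ≤ s * c := by
    have h1 : -s ≤ Real.log 2 / c := le_trans (neg_le_abs s) hs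
    have h2 : -s * c ≤ (Real.log 2 / c) * c := mul_le_mul_of_nonneg_right h1 hc0.le
    have h3 : (Real.log 2 / c) * c = Real.log 2 := by field_simp
    nlinarith
  have hq1 : ∀ x ∈ T, q x ≤ 1 := by
    intro x hx
    calc q x ≤ ∑ y ∈ T, q y :=
          Finset.single_le_sum (fun y hy => (hq0 y hy).le) hx
      _ = 1 := hqs
  obtain ⟨v, hv⟩ : ∃ v : ι → ℝ, v = fun x => -Real.log (q x) := ⟨_, rfl⟩
  have hv0 : ∀ x ∈ T, 0 ≤ v x := by
    intro x hx
    simp only [hv, neg_nonneg]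
    exact Real.log_nonpos (hq0 x hx).le (hq1 x hx)
  obtain ⟨w, hw⟩ : ∃ w : ι → ℝ, w = fun x => q x * Real.exp (s * v x) := ⟨_, rfl⟩
  have hw0 : ∀ x ∈ T, 0 < w x := fun x hx => by
    rw [hw]; exact mul_pos (hq0 x hx) (Real.exp_pos _)
  obtain ⟨D, hD⟩ : ∃ D : ℝ, D = ∑ x ∈ T, w x := ⟨_, rfl⟩
  have hD0 : 0 < D := by rw [hD]; exact Finset.sum_pos hw0 hT
  have hBc : c ^ 2 ≤ B := by
    rw [hB, le_div_iff₀ hl2]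
    nlinarith [sq_nonneg c]
  -- rewrite the goal
  have hgoal : ∑ x ∈ T, q x * Real.exp (s * -Real.log (q x)) *
      ((-Real.log (q x) - c) ^ 2 - c ^ 2 / Real.log 2)
      = (∑ x ∈ T, w x * (v x - c) ^ 2) - B * D := by
    rw [hD, hB, Finset.mul_sum, ← Finset.sum_sub_distrib]
    refine Finset.sum_congr rfl fun x hx => ?_
    simp only [hw, hv]
    ring
  rw [hgoal]
  obtain ⟨T', hT'⟩ : ∃ T' : Finset ι, T' = T.filter (fun x => 2 * c < v x) := ⟨_, rfl⟩
  obtain ⟨R, hR⟩ : ∃ R : ℝ, R = ∑ x ∈ T', w x * (v x * (v x - 2 * c)) := ⟨_, rfl⟩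
  have hA : (∑ x ∈ T, w x * (v x - c) ^ 2) ≤ c ^ 2 * D + R := by
    have h1 : (∑ x ∈ T, w x * (v x - c) ^ 2)
        = c ^ 2 * D + ∑ x ∈ T, w x * (v x * (v x - 2 * c)) := by
      rw [hD, Finset.mul_sum, ← Finset.sum_add_distrib]
      exact Finset.sum_congr rfl fun x hx => by ring
    rw [h1]
    have h2 : ∑ x ∈ T, w x * (v x * (v x - 2 * c)) ≤ R := by
      rw [hR, hT', ← Finset.sum_filter_add_sum_filter_not T (fun x => 2 * c < v x)]
      have h3 : ∑ x ∈ T.filter (fun x => ¬ 2 * c < v x), w x * (v x * (v x - 2 * c)) ≤ 0 := by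
        apply Finset.sum_nonpos
        intro x hx
        rw [Finset.mem_filter] at hx
        obtain ⟨hxT, hxv⟩ := hx
        push_neg at hxv
        have hwx := hw0 x hxT
        have hvx := hv0 x hxT
        have h5 : v x * (v x - 2 * c) ≤ 0 := by nlinarith
        have h6 : w x * (v x * (v x - 2 * c)) ≤ w x * 0 :=
          mul_le_mul_of_nonneg_left h5 hwx.le
        simpa using h6
      linarith
    linarith
  -- suffices to bound R
  have hfin : R ≤ (B - c ^ 2) * D := by
    clear hgoal hA
    by_cases hn2 : 2 ≤ n
    · have hc16 : (1.6:ℝ) ≤ c := hlog5c hn2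
      have hcardT' : (T'.card : ℝ) ≤ (n:ℝ) - 1 := by
        have hkpos : (0:ℝ) < T.card := by exact_mod_cast Finset.card_pos.mpr hT
        obtain ⟨x₀, hx₀T, hx₀⟩ : ∃ x ∈ T, (1:ℝ)/T.card ≤ q x := by
          apply Finset.exists_le_of_sum_le hT
          rw [hqs, Finset.sum_const, nsmul_eq_mul]
          rw [mul_one_div, div_self hkpos.ne']
        have hvx₀ : v x₀ ≤ c := by
          have h2 : Real.log ((1:ℝ)/(T.card:ℝ)) ≤ Real.log (q x₀) :=
            Real.log_le_log (by positivity) hx₀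
          rw [one_div, Real.log_inv] at h2
          simp only [hv]
          linarith [hlogcard]
        have hx₀T' : x₀ ∉ T' := by
          intro hmem
          rw [hT', Finset.mem_filter] at hmem
          linarith [hmem.2]
        have hsub : T' ⊆ T.erase x₀ := by
          intro x hx
          have hx2 := hx
          rw [hT', Finset.mem_filter] at hx2
          refine Finset.mem_erase.mpr ⟨?_, hx2.1⟩
          intro he; exact hx₀T' (he ▸ hx)
        have h4 : T'.card ≤ T.card - 1 := by
          calc T'.card ≤ (T.erase x₀).card := Finset.card_le_card hsub
            _ = T.card - 1 := Finset.card_erase_of_mem hx₀T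
        have h5 : (1:ℕ) ≤ T.card := Finset.card_pos.mpr hT
        have h6 : (T'.card:ℝ) ≤ (T.card:ℝ) - 1 := by
          have := Nat.cast_le (α := ℝ) |>.mpr h4
          rwa [Nat.cast_sub h5, Nat.cast_one] at this
        have h7 : (T.card:ℝ) ≤ (n:ℝ) := by exact_mod_cast hcard
        linarith
      have hexp2c : Real.exp (-(2*c)) * ((n:ℝ)+3)^2 = 1 := by
        have h1 : Real.exp (-(2*c)) * ((n:ℝ)+3)^2
            = Real.exp (-(2*c)) * (Real.exp c * Real.exp c) := by rw [hexpc]; ring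
        rw [h1, ← Real.exp_add, ← Real.exp_add,
          show -(2*c) + (c + c) = 0 by ring, Real.exp_zero]
      have hcnt : ((n:ℝ)-1) * Real.exp (-(2*c)) ≤ 1/16 := by
        have h16 : 16 * ((n:ℝ) - 1) ≤ ((n:ℝ)+3)^2 := by
          nlinarith [sq_nonneg ((n:ℝ) - 5)]
        have hep : 0 < Real.exp (-(2*c)) := Real.exp_pos _
        have h17 := mul_le_mul_of_nonneg_right h16 hep.le
        have h18 : ((n:ℝ)+3)^2 * Real.exp (-(2*c)) = 1 := by linarith [hexp2c]
        linarith
      have hcnt' : (T'.card:ℝ) * Real.exp (-(2*c)) ≤ 1/16 := by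
        have hep : 0 < Real.exp (-(2*c)) := Real.exp_pos _
        have := mul_le_mul_of_nonneg_right hcardT' hep.le
        linarith
      -- generic per-term rewriting
      have hterm : ∀ x ∈ T', w x * (v x * (v x - 2*c))
          = Real.exp ((s-1) * (2*c)) * (Real.exp ((s-1)*(v x - 2*c)) * ((v x - 2*c)^2 + 2*c*(v x - 2*c))) := by
        intro x hx
        rw [hT', Finset.mem_filter] at hx
        obtain ⟨hxT, h2c⟩ := hx
        have hqexp : q x = Real.exp (-(v x)) := by
          simp only [hv, neg_neg]
          rw [Real.exp_log (hq0 x hxT)]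
        have hwx : w x = q x * Real.exp (s * v x) := by rw [hw]
        rw [hwx, hqexp, ← Real.exp_add,
          show -v x + s * v x = (s-1)*(2*c) + ((s-1)*(v x - 2*c)) from by ring,
          Real.exp_add]
        ring
      have hupos : ∀ x ∈ T', 0 < v x - 2*c := by
        intro x hx
        rw [hT', Finset.mem_filter] at hx
        linarith [hx.2]
      by_cases hs0 : 0 ≤ s
      · -- positive s
        have hEE : ∀ x ∈ T', w x * (v x * (v x - 2 * c))
            ≤ Real.exp (-(2*c)) * (52 * Real.exp (-2) + 15 * Real.exp (-1) * c) := by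
          intro x hx
          rw [hterm x hx]
          exact per_term_pos c s (v x - 2*c) hc16 (hupos x hx) hsu hs0
        have hRb : R ≤ (1/16) * (52 * Real.exp (-2) + 15 * Real.exp (-1) * c) := by
          have h1 : R ≤ T'.card • (Real.exp (-(2*c)) * (52 * Real.exp (-2) + 15 * Real.exp (-1) * c)) := by
            rw [hR]
            exact Finset.sum_le_card_nsmul _ _ _ hEE
          rw [nsmul_eq_mul, ← mul_assoc] at h1
          refine count_mul ?_ hcnt' (by positivity)
          rw [mul_assoc] at h1
          exact h1
        have hD1 : 1 ≤ D := by
          rw [hD, ← hqs]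
          apply Finset.sum_le_sum
          intro x hx
          have hwx : w x = q x * Real.exp (s * v x) := by rw [hw]
          rw [hwx]
          have h1 : (1:ℝ) ≤ Real.exp (s * v x) := by
            rw [show (1:ℝ) = Real.exp 0 by simp]
            exact Real.exp_le_exp.mpr (mul_nonneg hs0 (hv0 x hx))
          calc q x = q x * 1 := by ring
            _ ≤ q x * Real.exp (s * v x) := mul_le_mul_of_nonneg_left h1 (hq0 x hx).le
        have hnum := num_pos c hc16
        have hBD : (B - c^2) * 1 ≤ (B - c^2) * D :=
          mul_le_mul_of_nonneg_left hD1 (by linarith [hBc])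
        rw [hB]
        rw [hB] at hBD
        linarith
      · -- negative s
        push_neg at hs0
        have hEE : ∀ x ∈ T', w x * (v x * (v x - 2 * c))
            ≤ Real.exp (-(2*c)) * (4 * Real.exp (-2) + 2 * Real.exp (-1) * c) := by
          intro x hx
          rw [hterm x hx]
          exact per_term_neg c s (v x - 2*c) hc0 (hupos x hx) hs0.le
        have hRb : R ≤ (1/16) * (4 * Real.exp (-2) + 2 * Real.exp (-1) * c) := by
          have h1 : R ≤ T'.card • (Real.exp (-(2*c)) * (4 * Real.exp (-2) + 2 * Real.exp (-1) * c)) := by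
            rw [hR]
            exact Finset.sum_le_card_nsmul _ _ _ hEE
          rw [nsmul_eq_mul] at h1
          exact count_mul h1 hcnt' (by positivity)
        have hHT : ∑ x ∈ T, q x * v x ≤ c := by
          have h1 : ∑ x ∈ T, q x * v x ≤ Real.log T.card := by
            rw [hv]
            exact entropy_le T hT q hq0 hqs
          linarith [hlogcard]
        have hHT0 : 0 ≤ ∑ x ∈ T, q x * v x :=
          Finset.sum_nonneg fun x hx => mul_nonneg (hq0 x hx).le (hv0 x hx)
        have hD1 : 1 - Real.log 2 ≤ D := by
          have h1 : ∀ x ∈ T, q x + s * (q x * v x) ≤ w x := by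
            intro x hx
            have hwx : w x = q x * Real.exp (s * v x) := by rw [hw]
            rw [hwx]
            have h2 : s * v x + 1 ≤ Real.exp (s * v x) := Real.add_one_le_exp _
            have h3 : q x * (s * v x + 1) ≤ q x * Real.exp (s * v x) :=
              mul_le_mul_of_nonneg_left h2 (hq0 x hx).le
            have h4 : q x + s * (q x * v x) = q x * (s * v x + 1) := by ring
            rw [h4]
            exact h3
          have h3 : ∑ x ∈ T, (q x + s * (q x * v x)) ≤ D := by
            rw [hD]; exact Finset.sum_le_sum h1
          rw [Finset.sum_add_distrib, hqs, ← Finset.mul_sum] at h3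
          have h4 : s * c ≤ s * ∑ x ∈ T, q x * v x :=
            mul_le_mul_of_nonpos_left hHT hs0.le
          linarith
        have hnum := num_neg c hc16
        have hBD : (B - c^2) * (1 - Real.log 2) ≤ (B - c^2) * D :=
          mul_le_mul_of_nonneg_left hD1 (by linarith [hBc])
        rw [hB]
        rw [hB] at hBD
        linarith
    · -- degenerate case n = 1
      have hn1' : n = 1 := by omega
      have hcard1 : T.card = 1 := le_antisymm (hn1' ▸ hcard) (Finset.card_pos.mpr hT)
      obtain ⟨x₀, hx0⟩ := Finset.card_eq_one.mp hcard1
      have hq1' : q x₀ = 1 := by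
        have h := hqs
        rw [hx0, Finset.sum_singleton] at h
        exact h
      have hT'e : T' = ∅ := by
        rw [hT', hx0]
        apply Finset.filter_eq_empty_iff.mpr
        intro x hx
        rw [Finset.mem_singleton] at hx
        subst hx
        simp only [hv, hq1', Real.log_one, neg_zero]
        push_neg
        linarith
      have hR0 : R = 0 := by rw [hR, hT'e, Finset.sum_empty]
      rw [hR0]
      exact mul_nonneg (by linarith [hBc]) hD0.le
  linarith [hA, hfin]

lemma var_le {g1 g2 g c B : ℝ} (hg : 0 < g)
    (hN : g2 - 2*c*g1 + c^2*g ≤ B*g) : (g2*g - g1*g1)/g^2 - B ≤ 0 := by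
  have key : g2*g - g1*g1 ≤ B*g^2 := by nlinarith [sq_nonneg (g1 - c*g)]
  rw [sub_nonpos, div_le_iff₀ (by positivity)]
  linarith

lemma concave_le {a : ℝ} (G G' G'' : ℝ → ℝ)
    (hG : ∀ x, HasDerivAt G (G' x) x) (hG' : ∀ x, HasDerivAt G' (G'' x) x)
    (hG0 : G 0 = 0) (hG'0 : G' 0 = 0)
    (hcc : ∀ x ∈ Set.Icc (-a) a, G'' x ≤ 0)
    (t : ℝ) (ht : t ∈ Set.Icc (-a) a) : G t ≤ 0 := by
  obtain ⟨ht1, ht2⟩ := ht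
  rcases lt_trichotomy t 0 with h | h | h
  · obtain ⟨η, hη, hslope⟩ := exists_hasDerivAt_eq_slope G G' h
      (fun x _ => (hG x).continuousAt.continuousWithinAt)
      (fun x _ => hG x)
    obtain ⟨hη1, hη2⟩ := hη
    obtain ⟨ξ, hξ, hslope2⟩ := exists_hasDerivAt_eq_slope G' G'' hη2
      (fun x _ => (hG' x).continuousAt.continuousWithinAt)
      (fun x _ => hG' x)
    obtain ⟨hξ1, hξ2⟩ := hξ
    rw [hG0] at hslope
    rw [hG'0] at hslope2
    have h2 := (eq_div_iff (by linarith : (0:ℝ) - t ≠ 0)).mp hslope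
    have h3 := (eq_div_iff (by linarith : (0:ℝ) - η ≠ 0)).mp hslope2
    have hξa : G'' ξ ≤ 0 := hcc ξ ⟨by linarith, by linarith⟩
    have h4 : 0 ≤ G' η := by
      nlinarith [mul_nonneg (neg_nonneg.mpr hξa) (by linarith : (0:ℝ) ≤ 0 - η)]
    nlinarith [mul_nonneg h4 (by linarith : (0:ℝ) ≤ 0 - t)]
  · rw [h, hG0]
  · obtain ⟨η, hη, hslope⟩ := exists_hasDerivAt_eq_slope G G' h
      (fun x _ => (hG x).continuousAt.continuousWithinAt)
      (fun x _ => hG x)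
    obtain ⟨hη1, hη2⟩ := hη
    obtain ⟨ξ, hξ, hslope2⟩ := exists_hasDerivAt_eq_slope G' G'' hη1
      (fun x _ => (hG' x).continuousAt.continuousWithinAt)
      (fun x _ => hG' x)
    obtain ⟨hξ1, hξ2⟩ := hξ
    rw [hG0] at hslope
    rw [hG'0] at hslope2
    have h2 := (eq_div_iff (by linarith : t - 0 ≠ 0)).mp hslope
    have h3 := (eq_div_iff (by linarith : η - 0 ≠ 0)).mp hslope2
    have hξa : G'' ξ ≤ 0 := hcc ξ ⟨by linarith, by linarith⟩
    have h4 : G' η ≤ 0 := by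
      nlinarith [mul_nonneg (neg_nonneg.mpr hξa) (by linarith : (0:ℝ) ≤ η - 0)]
    nlinarith [mul_nonneg (neg_nonneg.mpr h4) (by linarith : (0:ℝ) ≤ t - 0)]

theorem log_moment_bound
    {X Y : Type*} [Fintype X] [Fintype Y] [Nonempty X] [Nonempty Y]
    (P : X × Y → ℝ) (hP0 : ∀ z, 0 ≤ P z) (hP1 : ∑ z : X × Y, P z = 1)
    (t : ℝ) (ht : |t| ≤ 1 / Real.logb 2 (Fintype.card X + 3)) :
    Real.logb 2
        (∑ z ∈ Finset.univ.filter (fun z : X × Y => 0 < P z),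
          P z * (P z / (∑ x : X, P (x, z.2))) ^ (-t))
      ≤ t * condEntropy' P + (1 / 2) * t ^ 2 * (Real.logb 2 (Fintype.card X + 3)) ^ 2 := by
  classical
  set n : ℕ := Fintype.card X with hn
  set c : ℝ := Real.log ((n:ℝ) + 3) with hc
  have hl2 : (0:ℝ) < Real.log 2 := Real.log_pos (by norm_num)
  have hc0 : 0 < c := Real.log_pos (by
    have : (0:ℝ) ≤ (n:ℝ) := Nat.cast_nonneg n
    linarith)
  -- abbreviations
  set S : Finset (X × Y) := Finset.univ.filter (fun z : X × Y => 0 < P z) with hS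
  set PY : Y → ℝ := fun y => ∑ x : X, P (x, y) with hPY
  set v : X × Y → ℝ := fun z => -Real.log (P z / PY z.2) with hv
  -- basic facts
  have hSP : ∀ z ∈ S, 0 < P z := by
    intro z hz; rw [hS, Finset.mem_filter] at hz; exact hz.2
  have hPYpos : ∀ z ∈ S, 0 < PY z.2 := by
    intro z hz
    rw [hPY]
    have h1 : P z ≤ ∑ x : X, P (x, z.2) := by
      have : P (z.1, z.2) ≤ ∑ x : X, P (x, z.2) :=
        Finset.single_le_sum (fun x _ => hP0 (x, z.2)) (Finset.mem_univ z.1)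
      simpa using this
    have := hSP z hz
    simp only
    linarith
  have hQpos : ∀ z ∈ S, 0 < P z / PY z.2 := fun z hz => div_pos (hSP z hz) (hPYpos z hz)
  have hQle : ∀ z ∈ S, P z / PY z.2 ≤ 1 := by
    intro z hz
    rw [div_le_one (hPYpos z hz)]
    rw [hPY]
    have : P (z.1, z.2) ≤ ∑ x : X, P (x, z.2) :=
      Finset.single_le_sum (fun x _ => hP0 (x, z.2)) (Finset.mem_univ z.1)
    simpa using this
  have hv0 : ∀ z ∈ S, 0 ≤ v z := by
    intro z hz
    rw [hv]
    simp only [neg_nonneg]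
    exact Real.log_nonpos (hQpos z hz).le (hQle z hz)
  have hSsum : ∑ z ∈ S, P z = 1 := by
    rw [hS, ← hP1]
    apply Finset.sum_filter_of_ne
    intro z _ hz
    exact lt_of_le_of_ne (hP0 z) (Ne.symm hz)
  set μ : ℝ := ∑ z ∈ S, P z * v z with hμ
  set B : ℝ := c^2 / Real.log 2 with hB
  -- the functions
  obtain ⟨g, hg⟩ : ∃ g : ℝ → ℝ, g = fun u => ∑ z ∈ S, P z * Real.exp (u * v z) := ⟨_, rfl⟩
  obtain ⟨g1, hg1⟩ : ∃ g1 : ℝ → ℝ, g1 = fun u => ∑ z ∈ S, P z * (Real.exp (u * v z) * v z) := ⟨_, rfl⟩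
  obtain ⟨g2, hg2⟩ : ∃ g2 : ℝ → ℝ, g2 = fun u => ∑ z ∈ S, P z * ((Real.exp (u * v z) * v z) * v z) := ⟨_, rfl⟩
  have hSne : S.Nonempty := by
    rw [hS]
    by_contra hemp
    rw [Finset.not_nonempty_iff_eq_empty] at hemp
    have : ∑ z : X × Y, P z = 0 := by
      apply Finset.sum_eq_zero
      intro z hz
      by_contra hne
      have : z ∈ Finset.univ.filter (fun z : X × Y => 0 < P z) :=
        Finset.mem_filter.mpr ⟨hz, lt_of_le_of_ne (hP0 z) (Ne.symm hne)⟩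
      rw [hemp] at this
      exact absurd this (Finset.notMem_empty z)
    rw [hP1] at this
    norm_num at this
  have hgpos : ∀ u, 0 < g u := by
    intro u
    rw [hg]
    exact Finset.sum_pos (fun z hz => mul_pos (hSP z hz) (Real.exp_pos _)) hSne
  have hgd : ∀ u, HasDerivAt g (g1 u) u := by
    intro u
    rw [hg, hg1]
    apply HasDerivAt.fun_sum
    intro z hz
    simpa using ((hasDerivAt_id u).mul_const (v z)).exp.const_mul (P z)
  have hg1d : ∀ u, HasDerivAt g1 (g2 u) u := by
    intro u
    rw [hg1, hg2]
    apply HasDerivAt.fun_sum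
    intro z hz
    simpa using (((hasDerivAt_id u).mul_const (v z)).exp.mul_const (v z)).const_mul (P z)
  have hg0 : g 0 = 1 := by
    rw [hg]; simp only [zero_mul, Real.exp_zero, mul_one]; exact hSsum
  have hg10 : g1 0 = μ := by
    rw [hg1, hμ]
    simp only [zero_mul, Real.exp_zero, one_mul]
  -- key inequality : the tilted second moment bound, summed over y via key_y
  have hN : ∀ s : ℝ, |s| ≤ Real.log 2 / c →
      ∑ z ∈ S, P z * Real.exp (s * v z) * ((v z - c)^2 - B) ≤ 0 := by
    intro s hs
    have hdec : ∑ z ∈ S, P z * Real.exp (s * v z) * ((v z - c)^2 - B)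
        = ∑ y : Y, ∑ x ∈ Finset.univ.filter (fun x => 0 < P (x, y)),
            P (x,y) * Real.exp (s * v (x,y)) * ((v (x,y) - c)^2 - B) := by
      rw [hS, Finset.sum_filter]
      rw [Fintype.sum_prod_type_right
        (f := fun z : X × Y => if 0 < P z then P z * Real.exp (s * v z) * ((v z - c)^2 - B) else 0)]
      exact Finset.sum_congr rfl fun y _ => (Finset.sum_filter _ _).symm
    rw [hdec]
    apply Finset.sum_nonpos
    intro y _
    by_cases hTne : (Finset.univ.filter (fun x => 0 < P (x, y))).Nonempty
    · have hPYy : 0 < PY y := by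
        obtain ⟨x₀, hx₀⟩ := hTne
        rw [Finset.mem_filter] at hx₀
        rw [hPY]
        exact Finset.sum_pos' (fun x _ => hP0 (x,y)) ⟨x₀, Finset.mem_univ x₀, hx₀.2⟩
      have hTsum : ∑ x ∈ Finset.univ.filter (fun x => 0 < P (x, y)), P (x,y) = PY y := by
        rw [hPY]
        apply Finset.sum_filter_of_ne
        intro x _ hx
        exact lt_of_le_of_ne (hP0 (x,y)) (Ne.symm hx)
      have hkey := key_y n (Finset.univ.filter (fun x => 0 < P (x, y)))
        (fun x => P (x,y) / PY y)
        (le_trans (Finset.card_filter_le _ _) (le_of_eq (Finset.card_univ)))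
        (fun x hx => div_pos (Finset.mem_filter.mp hx).2 hPYy)
        (by rw [← Finset.sum_div, hTsum, div_self hPYy.ne'])
        s (by rw [← hc]; exact hs)
      rw [← hc] at hkey
      have heq : ∑ x ∈ Finset.univ.filter (fun x => 0 < P (x, y)),
            P (x,y) * Real.exp (s * v (x,y)) * ((v (x,y) - c)^2 - B)
          = PY y * ∑ x ∈ Finset.univ.filter (fun x => 0 < P (x, y)),
              (P (x,y) / PY y) * Real.exp (s * -Real.log (P (x,y) / PY y)) *
              ((-Real.log (P (x,y) / PY y) - c)^2 - c^2 / Real.log 2) := by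
        rw [Finset.mul_sum]
        refine Finset.sum_congr rfl fun x hx => ?_
        have hveq : v (x,y) = -Real.log (P (x,y) / PY y) := by rw [hv]
        rw [hveq, hB]
        field_simp
      rw [heq]
      exact mul_nonpos_iff.mpr (Or.inl ⟨hPYy.le, hkey⟩)
    · rw [Finset.not_nonempty_iff_eq_empty] at hTne
      rw [hTne, Finset.sum_empty]
  -- the auxiliary function G and its derivatives
  obtain ⟨G, hG⟩ : ∃ G : ℝ → ℝ,
      G = fun u => Real.log (g u) - u * μ - B/2 * u^2 := ⟨_, rfl⟩
  obtain ⟨G', hG'⟩ : ∃ G' : ℝ → ℝ,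
      G' = fun u => g1 u / g u - μ - B * u := ⟨_, rfl⟩
  obtain ⟨G'', hG''⟩ : ∃ G'' : ℝ → ℝ,
      G'' = fun u => (g2 u * g u - g1 u * g1 u) / (g u)^2 - B := ⟨_, rfl⟩
  have hGd : ∀ u, HasDerivAt G (G' u) u := by
    intro u
    rw [hG, hG']
    have h1 : HasDerivAt (fun y => Real.log (g y)) (g1 u / g u) u :=
      (hgd u).log (hgpos u).ne'
    have h2 : HasDerivAt (fun y : ℝ => y * μ) μ u := hasDerivAt_mul_const μ
    have h3 : HasDerivAt (fun y : ℝ => B/2 * y^2) (B/2 * (2*u)) u := by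
      simpa using (hasDerivAt_pow 2 u).const_mul (B/2)
    convert (h1.sub h2).sub h3 using 1

    · rfl
    · rfl
    · rfl
    · dsimp only
      ring
  have hG'd : ∀ u, HasDerivAt G' (G'' u) u := by
    intro u
    rw [hG', hG'']
    have h1 : HasDerivAt (fun y => g1 y / g y)
        ((g2 u * g u - g1 u * g1 u) / (g u)^2) u :=
      (hg1d u).div (hgd u) (hgpos u).ne'
    have h3 : HasDerivAt (fun y : ℝ => B * y) B u := by
      simpa using (hasDerivAt_id u).const_mul B
    convert (h1.sub (hasDerivAt_const _ μ)).sub h3 using 1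

    · rfl
    · rfl
    · rfl
    · dsimp only
      ring
  have hG0' : G 0 = 0 := by
    rw [hG]; simp [hg0]
  have hG'0 : G' 0 = 0 := by
    rw [hG']; simp [hg0, hg10]
  have hcc : ∀ u ∈ Set.Icc (-(Real.log 2 / c)) (Real.log 2 / c), G'' u ≤ 0 := by
    intro u hu
    rw [hG'']
    apply var_le (c := c) (hgpos u)
    have habs : |u| ≤ Real.log 2 / c := abs_le.mpr ⟨hu.1, hu.2⟩
    have hNu := hN u habs
    have hexpand : g2 u - 2*c*g1 u + c^2 * g u - B * g u
        = ∑ z ∈ S, P z * Real.exp (u * v z) * ((v z - c)^2 - B) := by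
      rw [hg, hg1, hg2]
      simp only
      rw [Finset.mul_sum, Finset.mul_sum, Finset.mul_sum,
        ← Finset.sum_sub_distrib, ← Finset.sum_add_distrib, ← Finset.sum_sub_distrib]
      exact Finset.sum_congr rfl fun z hz => by ring
    linarith
  -- apply the concavity argument
  have hlb : (1:ℝ) / Real.logb 2 ((n:ℝ)+3) = Real.log 2 / c := by
    rw [show Real.logb 2 ((n:ℝ)+3) = Real.log ((n:ℝ)+3) / Real.log 2 from rfl, ← hc,
      one_div_div]
  have ha : t ∈ Set.Icc (-(Real.log 2 / c)) (Real.log 2 / c) := by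
    rw [hlb] at ht
    exact Set.mem_Icc.mpr (abs_le.mp ht)
  have hGt := concave_le G G' G'' hGd hG'd hG0' hG'0 hcc t ha
  have hlog : Real.log (g t) ≤ t * μ + B/2 * t^2 := by
    rw [hG] at hGt
    simp only at hGt
    linarith
  -- identify the goal's sum with g t
  have hLHS : ∑ z ∈ S, P z * (P z / PY z.2) ^ (-t) = g t := by
    rw [hg]
    refine Finset.sum_congr rfl fun z hz => ?_
    congr 1
    rw [Real.rpow_def_of_pos (hQpos z hz)]
    congr 1
    rw [hv]
    simp only
    ring
  -- identify the entropy
  have hH : condEntropy' P = μ / Real.log 2 := by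
    rw [condEntropy', hμ]
    have h1 : ∑ z : X × Y, P z * Real.logb 2 (P z / (∑ x : X, P (x, z.2)))
        = ∑ z ∈ S, P z * Real.logb 2 (P z / PY z.2) := by
      rw [hS]
      refine (Finset.sum_filter_of_ne ?_).symm
      intro z _ hz
      by_contra hp
      push_neg at hp
      have : P z = 0 := le_antisymm hp (hP0 z)
      rw [this] at hz
      simp at hz
    rw [h1, ← Finset.sum_neg_distrib, Finset.sum_div]
    refine Finset.sum_congr rfl fun z hz => ?_
    rw [show Real.logb 2 (P z / PY z.2) = Real.log (P z / PY z.2) / Real.log 2 from rfl, hv]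
    simp only
    field_simp
  -- finish
  have hgoal2 : ∑ z ∈ S, P z * (P z / (∑ x : X, P (x, z.2))) ^ (-t) = g t := by
    rw [← hLHS]
  rw [hgoal2, hH]
  have hlogb : Real.logb 2 (g t) = Real.log (g t) / Real.log 2 := rfl
  have hLb2 : Real.logb 2 ((n:ℝ)+3) = c / Real.log 2 := by
    rw [show Real.logb 2 ((n:ℝ)+3) = Real.log ((n:ℝ)+3) / Real.log 2 from rfl, ← hc]
  rw [hlogb, hLb2]
  have hstep : Real.log (g t) / Real.log 2 ≤ (t * μ + B/2 * t^2) / Real.log 2 := by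
    apply div_le_div_of_nonneg_right hlog hl2.le
  calc Real.log (g t) / Real.log 2 ≤ (t * μ + B/2 * t^2) / Real.log 2 := hstep
    _ = t * (μ / Real.log 2) + 1/2 * t^2 * (c / Real.log 2)^2 := by
        rw [hB]
        field_simp
end

section
/- For any t ∈ ℝ and any z ∈ (0, ∞), r_t(z) ≤ r_{|t|}(z + 1/z), where r_t(z) := z^t − t·ln(z) − 1. -/
open Real

private lemma lemA {s a b : ℝ} (hs : 0 ≤ s) (ha : 1 ≤ a) (hab : a ≤ b) :
    a ^ s - s * Real.log a ≤ b ^ s - s * Real.log b := by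
  have ha0 : (0:ℝ) < a := lt_of_lt_of_le one_pos ha
  have hb0 : (0:ℝ) < b := lt_of_lt_of_le ha0 hab
  rw [Real.rpow_def_of_pos ha0, Real.rpow_def_of_pos hb0]
  set u := Real.log a * s with hu
  set v := Real.log b * s with hv
  have hu0 : 0 ≤ u := mul_nonneg (Real.log_nonneg ha) hs
  have huv : u ≤ v := by
    apply mul_le_mul_of_nonneg_right _ hs
    exact Real.log_le_log ha0 hab
  have h1 : Real.exp u * (1 + (v - u)) ≤ Real.exp v := by
    calc Real.exp u * (1 + (v - u)) ≤ Real.exp u * Real.exp (v - u) := by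
          apply mul_le_mul_of_nonneg_left _ (Real.exp_pos u).le
          linarith [Real.add_one_le_exp (v - u)]
      _ = Real.exp v := by rw [← Real.exp_add]; ring_nf
  have h2 : 1 ≤ Real.exp u := Real.one_le_exp hu0
  have hlog : s * Real.log a = u := by rw [hu]; ring
  have hlog' : s * Real.log b = v := by rw [hv]; ring
  rw [hlog, hlog']
  nlinarith [Real.exp_pos u]

private lemma lemB {s a : ℝ} (hs : 0 ≤ s) (ha0 : 0 < a) (ha : a ≤ 1) :
    a ^ s - s * Real.log a ≤ (1/a) ^ s - s * Real.log (1/a) := by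
  have hia : (0:ℝ) < 1/a := by positivity
  rw [Real.rpow_def_of_pos ha0, Real.rpow_def_of_pos hia, Real.log_div one_ne_zero ha0.ne',
    Real.log_one]
  set u := -(s * Real.log a) with hu
  have hu0 : 0 ≤ u := by
    rw [hu]
    have := Real.log_nonpos ha0.le ha
    nlinarith
  have hsinh : u ≤ Real.sinh u := Real.self_le_sinh_iff.mpr hu0
  rw [Real.sinh_eq] at hsinh
  have h1 : Real.log a * s = -u := by rw [hu]; ring
  rw [h1]
  have h2 : (0 - Real.log a) * s = u := by rw [hu]; ring
  rw [h2]
  linarith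

private lemma lemC {s w : ℝ} (hs : 0 ≤ s) (hw : 0 < w) :
    w ^ s - s * Real.log w ≤ (w + 1/w) ^ s - s * Real.log (w + 1/w) := by
  rcases le_total 1 w with h1 | h1
  · exact lemA hs h1 (by nlinarith [one_div_pos.mpr hw])
  · have hiw : 1 ≤ 1/w := by rw [le_div_iff₀ hw]; linarith
    calc w ^ s - s * Real.log w ≤ (1/w) ^ s - s * Real.log (1/w) := lemB hs hw h1
      _ ≤ (w + 1/w) ^ s - s * Real.log (w + 1/w) := lemA hs hiw (by nlinarith)

theorem r_t_le_r_abs_t (t : ℝ) (z : ℝ) (hz : 0 < z) :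
    z ^ t - t * Real.log z - 1
      ≤ (z + 1 / z) ^ |t| - |t| * Real.log (z + 1 / z) - 1 := by
  rcases le_total 0 t with ht | ht
  · rw [abs_of_nonneg ht]
    have := lemC ht hz
    linarith
  · rw [abs_of_nonpos ht]
    have hz' : (0:ℝ) < 1/z := by positivity
    have := lemC (neg_nonneg.mpr ht) hz'
    have hrw : (1/z : ℝ) + 1/(1/z) = z + 1/z := by field_simp; ring
    rw [hrw] at this
    have h1 : (1/z) ^ (-t) = z ^ t := by
      rw [one_div, Real.inv_rpow hz.le, ← Real.rpow_neg hz.le, neg_neg]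
    have h2 : Real.log (1/z) = -Real.log z := by
      rw [Real.log_div one_ne_zero hz.ne', Real.log_one]; ring
    rw [h1, h2] at this
    linarith
end

section
/- For any t ∈ [−1/2, 1/2], the function r_t(z) := z^t − t·ln(z) − 1 is concave on the interval [4, ∞). -/
open Real

lemma key_exp_ineq (t : ℝ) (h0 : 0 ≤ t) (h1 : t ≤ 1 / 2) :
    Real.exp (t * (-Real.log 2 * 2)) ≤ 1 - t := by
  have hc := convexOn_exp.2 (Set.mem_univ (0 : ℝ)) (Set.mem_univ (-Real.log 2))
    (show (0:ℝ) ≤ 1 - 2 * t by linarith) (show (0:ℝ) ≤ 2 * t by linarith)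
    (show (1 - 2 * t) + 2 * t = 1 by ring)
  simp only [smul_eq_mul, mul_zero, zero_add, Real.exp_zero, mul_one] at hc
  rw [Real.exp_neg, Real.exp_log (by norm_num)] at hc
  calc Real.exp (t * (-Real.log 2 * 2)) = Real.exp (2 * t * -Real.log 2) := by ring_nf
    _ ≤ (1 - 2 * t) + 2 * t * 2⁻¹ := hc
    _ = 1 - t := by ring

theorem r_t_concave (t : ℝ) (ht : t ∈ Set.Icc (-(1 / 2) : ℝ) (1 / 2)) :
    ConcaveOn ℝ (Set.Ici (4 : ℝ)) (fun z : ℝ => z ^ t - t * Real.log z - 1) := by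
  obtain ⟨ht1, ht2⟩ := ht
  have hint : interior (Set.Ici (4 : ℝ)) = Set.Ioi 4 := interior_Ici
  apply concaveOn_of_hasDerivWithinAt2_nonpos (f' := fun z => t * z ^ (t - 1) - t / z)
    (f'' := fun z => t * (t - 1) * z ^ (t - 2) + t / z ^ 2) (convex_Ici 4)
  · -- continuity
    intro z hz
    have hz0 : z ≠ 0 := by simp only [Set.mem_Ici] at hz; positivity
    apply ContinuousWithinAt.sub
    apply ContinuousWithinAt.sub
    · exact (Real.continuousAt_rpow_const z t (Or.inl hz0)).continuousWithinAt
    · exact (continuousAt_const.mul (Real.continuousAt_log hz0)).continuousWithinAt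
    · exact continuousWithinAt_const
  · -- first derivative
    intro z hz
    rw [hint] at hz ⊢
    have hz0 : (0:ℝ) < z := lt_trans (by norm_num) hz
    have h1 : HasDerivAt (fun z : ℝ => z ^ t) (t * z ^ (t - 1)) z := by
      simpa [mul_comm] using Real.hasDerivAt_rpow_const (x := z) (p := t) (Or.inl hz0.ne')
    have h2 : HasDerivAt (fun z : ℝ => t * Real.log z) (t / z) z := by
      simpa [div_eq_mul_inv, mul_comm] using (Real.hasDerivAt_log hz0.ne').const_mul t
    exact (((h1.sub h2).sub_const 1)).hasDerivWithinAt
  · -- second derivative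
    intro z hz
    rw [hint] at hz ⊢
    have hz0 : (0:ℝ) < z := lt_trans (by norm_num) hz
    have h1 : HasDerivAt (fun z : ℝ => t * z ^ (t - 1)) (t * ((t - 1) * z ^ (t - 1 - 1))) z := by
      have := Real.hasDerivAt_rpow_const (x := z) (p := t - 1) (Or.inl hz0.ne')
      simpa [mul_comm, mul_assoc, mul_left_comm] using this.const_mul t
    have h2 : HasDerivAt (fun z : ℝ => t / z) (-(t / z ^ 2)) z := by
      have := (hasDerivAt_inv hz0.ne').const_mul t
      simpa [div_eq_mul_inv, neg_mul, mul_neg] using this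
    have h := h1.sub h2
    have heq : t * ((t - 1) * z ^ (t - 1 - 1)) - -(t / z ^ 2)
        = t * (t - 1) * z ^ (t - 2) + t / z ^ 2 := by
      ring_nf
    rw [heq] at h
    exact h.hasDerivWithinAt
  · -- nonpositivity
    intro z hz
    rw [hint] at hz
    have hz4 : (4:ℝ) ≤ z := le_of_lt hz
    have hz0 : (0:ℝ) < z := by linarith
    have hzt2 : z ^ (t - 2) = z ^ t / z ^ 2 := by
      rw [Real.rpow_sub hz0, Real.rpow_two]
    rw [hzt2]
    have hz2 : (0:ℝ) < z ^ 2 := by positivity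
    have key : t * ((t - 1) * z ^ t + 1) ≤ 0 := by
      rcases lt_trichotomy t 0 with hneg | hzero | hpos
      · -- t < 0 : need (t-1) z^t + 1 ≥ 0, i.e. (1-t) z^t ≤ 1
        have h1t : (0:ℝ) < 1 - t := by linarith
        have hlogz : Real.log 4 ≤ Real.log z := Real.log_le_log (by norm_num) hz4
        have hzt : z ^ t ≤ Real.exp (t * Real.log 4) := by
          rw [Real.rpow_def_of_pos hz0]
          apply Real.exp_le_exp.2
          nlinarith
        have hlog4 : (1:ℝ) < Real.log 4 := by
          have : Real.exp 1 < 4 := by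
            have := Real.exp_one_lt_d9
            linarith
          calc (1:ℝ) = Real.log (Real.exp 1) := (Real.log_exp 1).symm
            _ < Real.log 4 := Real.log_lt_log (Real.exp_pos 1) this
        have hexp : 1 - t ≤ Real.exp (-(t * Real.log 4)) := by
          have := Real.add_one_le_exp (-(t * Real.log 4))
          nlinarith
        have : (1 - t) * Real.exp (t * Real.log 4) ≤ 1 := by
          rw [Real.exp_neg] at hexp
          have hep : (0:ℝ) < Real.exp (t * Real.log 4) := Real.exp_pos _
          rw [le_inv_comm₀ h1t hep] at hexp
          calc (1 - t) * Real.exp (t * Real.log 4) ≤ (1 - t) * (1 - t)⁻¹ := by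
                exact mul_le_mul_of_nonneg_left hexp (le_of_lt h1t)
            _ = 1 := mul_inv_cancel₀ h1t.ne'
        have hge : (t - 1) * z ^ t + 1 ≥ 0 := by nlinarith
        nlinarith
      · simp [hzero]
      · -- t > 0 : need (1-t) z^t ≥ 1
        have hk := key_exp_ineq t (le_of_lt hpos) ht2
        have h4t : Real.exp (t * (-Real.log 2 * 2)) = ((4:ℝ) ^ t)⁻¹ := by
          rw [Real.rpow_def_of_pos (by norm_num : (0:ℝ) < 4), ← Real.exp_neg]
          congr 1
          have : Real.log 4 = 2 * Real.log 2 := by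
            rw [show (4:ℝ) = 2 ^ 2 by norm_num, Real.log_pow]
            push_cast; ring
          rw [this]; ring
        rw [h4t] at hk
        have h4tp : (0:ℝ) < (4:ℝ) ^ t := Real.rpow_pos_of_pos (by norm_num) t
        have h41 : 1 ≤ (1 - t) * (4:ℝ) ^ t := by
          rw [inv_le_iff_one_le_mul₀ h4tp] at hk
          linarith [hk]
        have hz4t : (4:ℝ) ^ t ≤ z ^ t :=
          Real.rpow_le_rpow (by norm_num) hz4 (le_of_lt hpos)
        have h1t : (0:ℝ) ≤ 1 - t := by linarith
        have : 1 ≤ (1 - t) * z ^ t := by nlinarith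
        nlinarith
    calc t * (t - 1) * (z ^ t / z ^ 2) + t / z ^ 2
        = (t * ((t - 1) * z ^ t + 1)) / z ^ 2 := by ring
      _ ≤ 0 := div_nonpos_of_nonpos_of_nonneg key (le_of_lt hz2)
end

section
/- For any z ∈ [1, ∞) and any t ∈ ℝ with −1/log(z) ≤ t ≤ 1/log(z) (no constraint on t when z = 1), one has r_t(z) ≤ (1 − ln 2)·log²(z)·t², where r_t(z) := z^t − t·ln(z) − 1 and log is the binary logarithm. -/
open Real

lemma exp_sub_one_sub_eq_tsum (y : ℝ) :
    Real.exp y - 1 - y = ∑' n : ℕ, y ^ (n + 2) / (n + 2).factorial := by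
  have hsum : Summable (fun n : ℕ => y ^ n / n.factorial) :=
    Real.summable_pow_div_factorial y
  have := Summable.sum_add_tsum_nat_add (f := fun n : ℕ => y ^ n / n.factorial) 2 hsum
  have hexp : Real.exp y = ∑' n : ℕ, y ^ n / n.factorial := by
    rw [Real.exp_eq_exp_ℝ, NormedSpace.exp_eq_tsum_div]
  rw [hexp, ← this]
  simp [Finset.sum_range_succ]
  ring

lemma key_exp_bound (x : ℝ) (hx : |x| ≤ Real.log 2) :
    Real.exp x - 1 - x ≤ (1 - Real.log 2) / (Real.log 2) ^ 2 * x ^ 2 := by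
  set L := Real.log 2 with hLdef
  have hL : 0 < L := Real.log_pos (by norm_num)
  have hbound : ∀ n : ℕ, x ^ (n + 2) / (n + 2).factorial
      ≤ x ^ 2 / L ^ 2 * (L ^ (n + 2) / (n + 2).factorial) := by
    intro n
    have hfac : (0 : ℝ) < (n + 2).factorial := by positivity
    have h1 : x ^ (n + 2) ≤ x ^ 2 * L ^ n := by
      calc x ^ (n + 2) ≤ |x ^ (n + 2)| := le_abs_self _
        _ = |x| ^ 2 * |x| ^ n := by rw [abs_pow]; ring
        _ ≤ |x| ^ 2 * L ^ n := by
            exact mul_le_mul_of_nonneg_left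
              (pow_le_pow_left₀ (abs_nonneg x) hx n) (by positivity)
        _ = x ^ 2 * L ^ n := by rw [sq_abs]
    have h2 : x ^ 2 / L ^ 2 * (L ^ (n + 2) / (n + 2).factorial)
        = x ^ 2 * L ^ n / (n + 2).factorial := by
      field_simp
      ring
    rw [h2]
    exact div_le_div_of_nonneg_right h1 hfac.le |>.trans_eq rfl
  have hsx : Summable (fun n : ℕ => x ^ (n + 2) / ((n + 2).factorial : ℝ)) :=
    (summable_nat_add_iff 2).2 (Real.summable_pow_div_factorial x)
  have hsL : Summable (fun n : ℕ => x ^ 2 / L ^ 2 * (L ^ (n + 2) / ((n + 2).factorial : ℝ))) :=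
    ((summable_nat_add_iff 2).2 (Real.summable_pow_div_factorial L)).mul_left _
  calc Real.exp x - 1 - x = ∑' n : ℕ, x ^ (n + 2) / (n + 2).factorial :=
        exp_sub_one_sub_eq_tsum x
    _ ≤ ∑' n : ℕ, x ^ 2 / L ^ 2 * (L ^ (n + 2) / (n + 2).factorial) :=
        Summable.tsum_le_tsum hbound hsx hsL
    _ = x ^ 2 / L ^ 2 * ∑' n : ℕ, L ^ (n + 2) / (n + 2).factorial := tsum_mul_left
    _ = x ^ 2 / L ^ 2 * (Real.exp L - 1 - L) := by rw [← exp_sub_one_sub_eq_tsum]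
    _ = (1 - L) / L ^ 2 * x ^ 2 := by
        rw [hLdef, Real.exp_log (by norm_num : (0:ℝ) < 2)]
        ring

theorem r_t_quadratic_bound (z t : ℝ) (hz : 1 ≤ z)
    (ht : z = 1 ∨ (-(1 / Real.logb 2 z) ≤ t ∧ t ≤ 1 / Real.logb 2 z)) :
    z ^ t - t * Real.log z - 1
      ≤ (1 - Real.log 2) * (Real.logb 2 z) ^ 2 * t ^ 2 := by
  have hz0 : (0:ℝ) < z := lt_of_lt_of_le one_pos hz
  have hL : 0 < Real.log 2 := Real.log_pos (by norm_num)
  have hlog : Real.log z = Real.logb 2 z * Real.log 2 := by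
    rw [Real.logb]
    field_simp
  have hb0 : 0 ≤ Real.logb 2 z := Real.logb_nonneg (by norm_num) hz
  have hx : |t * Real.log z| ≤ Real.log 2 := by
    rcases ht with h1 | ⟨hlo, hhi⟩
    · subst h1; simp [Real.log_one]; exact le_of_lt hL
    · rcases eq_or_lt_of_le hb0 with hb | hb
      · rw [hlog, ← hb]
        simp [le_of_lt hL]
      · have h1 : |t| ≤ 1 / Real.logb 2 z := abs_le.2 ⟨hlo, hhi⟩
        have h2 : |t| * Real.logb 2 z ≤ 1 := by
          rw [← le_div_iff₀ hb] at *
          exact h1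
        calc |t * Real.log z| = |t| * Real.logb 2 z * Real.log 2 := by
              rw [hlog, abs_mul, abs_of_nonneg (by positivity : (0:ℝ) ≤ Real.logb 2 z * Real.log 2)]
              ring
          _ ≤ 1 * Real.log 2 := by
              exact mul_le_mul_of_nonneg_right h2 (le_of_lt hL)
          _ = Real.log 2 := one_mul _
  have key := key_exp_bound (t * Real.log z) hx
  have hrpow : z ^ t = Real.exp (t * Real.log z) := by
    rw [Real.rpow_def_of_pos hz0]
    ring_nf
  have heq : (1 - Real.log 2) / (Real.log 2) ^ 2 * (t * Real.log z) ^ 2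
      = (1 - Real.log 2) * (Real.logb 2 z) ^ 2 * t ^ 2 := by
    rw [hlog]
    field_simp
  rw [hrpow]
  linarith [key, heq.ge, heq.le]
end
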